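/- arXiv:1309.2094 — 12 statements merged into one kernel-verified Lean document; each statement's English description precedes it below -/
import Mathlib

section
/- If f : ℝⁿ → ℝ is convex with full domain (everywhere finite), then its convex conjugate f* is coercive, i.e., f*(x*)/‖x*‖₂ → ∞ as ‖x*‖₂ → ∞. -/
open scoped RealInnerProductSpace

/-- If `f : ℝⁿ → ℝ` is convex with full domain, then its convex conjugate
`f* : ℝⁿ → ℝ` (characterized as the least upper bound of `x* ↦ ⟨x*,x⟩ − f(x)`) is coercive:
`f*(x*)/‖x*‖ → ∞` as `‖x*‖ → ∞`. -/
theorem conjugate_coercive {n : ℕ}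
    (f : EuclideanSpace ℝ (Fin n) → ℝ)
    (hconv : ConvexOn ℝ Set.univ f)
    (fstar : EuclideanSpace ℝ (Fin n) → ℝ)
    (hfstar : ∀ xs, IsLUB {r : ℝ | ∃ x, r = ⟪xs, x⟫ - f x} (fstar xs)) :
    Filter.Tendsto (fun xs => fstar xs / ‖xs‖)
      (Filter.cocompact (EuclideanSpace ℝ (Fin n))) Filter.atTop := by
  rw [Filter.tendsto_atTop]
  intro b
  set M : ℝ := max b 0 + 1 with hMdef
  have hM1 : 1 ≤ M := le_add_of_nonneg_left (le_max_right b 0)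
  have hM0 : 0 < M := lt_of_lt_of_le one_pos hM1
  -- f is continuous on the closed ball of radius M
  have hfc : ContinuousOn f (Metric.closedBall (0 : EuclideanSpace ℝ (Fin n)) M) :=
    (hconv.continuousOn isOpen_univ).mono (Set.subset_univ _)
  obtain ⟨z, hz, hzbound⟩ :=
    (isCompact_closedBall (0 : EuclideanSpace ℝ (Fin n)) M).exists_isMaxOn
      ⟨0, Metric.mem_closedBall_self (le_of_lt hM0)⟩ hfc
  set C : ℝ := max (f z) 1 with hCdef
  have hC1 : 1 ≤ C := le_max_right _ _
  have hC0 : 0 < C := lt_of_lt_of_le one_pos hC1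
  have hbound : ∀ x ∈ Metric.closedBall (0 : EuclideanSpace ℝ (Fin n)) M, f x ≤ C :=
    fun x hx => le_trans (hzbound hx) (le_max_left _ _)
  have hev : ∀ᶠ xs in Filter.cocompact (EuclideanSpace ℝ (Fin n)), C ≤ ‖xs‖ :=
    tendsto_norm_cocompact_atTop.eventually_ge_atTop C
  refine hev.mono fun xs hxs => ?_
  have hxs0 : 0 < ‖xs‖ := lt_of_lt_of_le hC0 hxs
  set x : EuclideanSpace ℝ (Fin n) := (M / ‖xs‖) • xs with hxdef
  have hxball : x ∈ Metric.closedBall (0 : EuclideanSpace ℝ (Fin n)) M := by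
    rw [Metric.mem_closedBall, dist_zero_right, hxdef, norm_smul]
    rw [Real.norm_eq_abs, abs_of_pos (div_pos hM0 hxs0)]
    rw [div_mul_cancel₀ _ (ne_of_gt hxs0)]
  have hinner : ⟪xs, x⟫ = M * ‖xs‖ := by
    rw [hxdef, real_inner_smul_right, real_inner_self_eq_norm_sq]
    field_simp
  have hlb : M * ‖xs‖ - C ≤ fstar xs := by
    have h1 : (⟪xs, x⟫ - f x) ≤ fstar xs := (hfstar xs).1 ⟨x, rfl⟩
    have h2 : f x ≤ C := hbound x hxball
    rw [hinner] at h1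
    linarith
  have hdiv : C / ‖xs‖ ≤ 1 := (div_le_one hxs0).mpr hxs
  have : M - C / ‖xs‖ ≤ fstar xs / ‖xs‖ := by
    calc M - C / ‖xs‖ = (M * ‖xs‖ - C) / ‖xs‖ := by field_simp
      _ ≤ fstar xs / ‖xs‖ := (div_le_div_iff_of_pos_right hxs0).mpr hlb
  have hb : b ≤ M - 1 := by have := le_max_left b 0; rw [hMdef]; linarith
  linarith
end

section
/- If f : ℝⁿ → ℝ is strongly convex with modulus α > 0, then its conjugate f* is differentiable with Lipschitz-continuous gradient: ‖∇f*(x*) − ∇f*(y*)‖₂ ≤ (1/α)‖x* − y*‖₂ for all x*, y* ∈ ℝⁿ. -/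
open scoped RealInnerProductSpace

/-- Subgradient of `f` at `x`. -/
def IsSubgrad {E : Type*} [NormedAddCommGroup E] [InnerProductSpace ℝ E]
    (f : E → ℝ) (x xs : E) : Prop :=
  ∀ y, f x + ⟪xs, y - x⟫ ≤ f y

/-- If `f` is strongly convex with modulus `α > 0`, then its Fenchel conjugate
`f*` is differentiable with `(1/α)`-Lipschitz gradient. -/
theorem conjugate_gradient_lipschitz {n : ℕ} (f : EuclideanSpace ℝ (Fin n) → ℝ)
    (hf : Continuous f) (hconv : ConvexOn ℝ Set.univ f)
    (α : ℝ) (hα : 0 < α)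
    (hstrong : ∀ x xs, IsSubgrad f x xs →
      ∀ y, f x + ⟪xs, y - x⟫ + α / 2 * ‖y - x‖ ^ 2 ≤ f y)
    (fstar : EuclideanSpace ℝ (Fin n) → ℝ)
    (hfstar : ∀ xs, IsLUB {r : ℝ | ∃ x, r = ⟪xs, x⟫ - f x} (fstar xs)) :
    ∃ g : EuclideanSpace ℝ (Fin n) → EuclideanSpace ℝ (Fin n),
      (∀ xs, HasGradientAt fstar (g xs) xs) ∧
      (∀ xs ys, ‖g xs - g ys‖ ≤ (1 / α) * ‖xs - ys‖) := by
  classical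
  have hub : ∀ p x : EuclideanSpace ℝ (Fin n), ⟪p, x⟫ - f x ≤ fstar p := fun p x => (hfstar p).1 ⟨x, rfl⟩
  -- fstar is convex
  have hconvstar : ConvexOn ℝ (Set.univ : Set (EuclideanSpace ℝ (Fin n))) fstar := by
    refine ⟨convex_univ, ?_⟩
    intro x _ y _ a b ha hb hab
    refine (hfstar _).2 ?_
    rintro r ⟨z, rfl⟩
    have h1 := hub x z
    have h2 := hub y z
    have hinner : ⟪a • x + b • y, z⟫ = a * ⟪x, z⟫ + b * ⟪y, z⟫ := by
      rw [inner_add_left, real_inner_smul_left, real_inner_smul_left]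
    rw [hinner]
    simp only [smul_eq_mul]
    have hfz : a * f z + b * f z = f z := by rw [← add_mul, hab, one_mul]
    linarith [mul_le_mul_of_nonneg_left h1 ha, mul_le_mul_of_nonneg_left h2 hb, hfz]
  have hcontstar : ContinuousOn fstar (Set.univ : Set (EuclideanSpace ℝ (Fin n))) :=
    hconvstar.continuousOn isOpen_univ
  -- existence of a maximizer for each p
  have hexists : ∀ p : EuclideanSpace ℝ (Fin n), ∃ m, ∀ y, ⟪p, y⟫ - f y ≤ ⟪p, m⟫ - f m := by
    intro p
    obtain ⟨C, hC⟩ := (isCompact_closedBall p 1).exists_bound_of_continuousOn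
      (hcontstar.mono (Set.subset_univ _))
    set R : ℝ := max 1 (C + f 0 + 1) with hRdef
    have hR1 : (1 : ℝ) ≤ R := le_max_left _ _
    have hR2 : C + f 0 + 1 ≤ R := le_max_right _ _
    have hcontφ : Continuous fun x : EuclideanSpace ℝ (Fin n) => ⟪p, x⟫ - f x :=
      (continuous_const.inner continuous_id).sub hf
    obtain ⟨m, hm, hmax⟩ := (isCompact_closedBall (0 : EuclideanSpace ℝ (Fin n)) R).exists_isMaxOn
      ⟨0, Metric.mem_closedBall_self (by linarith)⟩ hcontφ.continuousOn
    refine ⟨m, fun y => ?_⟩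
    by_cases hy : ‖y‖ ≤ R
    · exact hmax (by simpa [Metric.mem_closedBall, dist_eq_norm] using hy)
    · push_neg at hy
      have hy0 : ‖y‖ ≠ 0 := by intro h; rw [h] at hy; linarith
      set u : EuclideanSpace ℝ (Fin n) := ‖y‖⁻¹ • y with hu
      have hunorm : ‖u‖ = 1 := by
        rw [hu, norm_smul, norm_inv, norm_norm, inv_mul_cancel₀ hy0]
      have hqmem : p + u ∈ Metric.closedBall p 1 := by
        simp [Metric.mem_closedBall, dist_eq_norm, hunorm]
      have h1 : ⟪p + u, y⟫ - f y ≤ fstar (p + u) := hub _ y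
      have h2 : fstar (p + u) ≤ C := le_trans (le_abs_self _) (hC _ hqmem)
      have hinner : ⟪p + u, y⟫ = ⟪p, y⟫ + ‖y‖ := by
        rw [inner_add_left, hu, real_inner_smul_left, real_inner_self_eq_norm_sq]
        field_simp
      have h0 : ⟪p, (0 : EuclideanSpace ℝ (Fin n))⟫ - f 0 ≤ ⟪p, m⟫ - f m :=
        hmax (Metric.mem_closedBall_self (by linarith))
      rw [inner_zero_right] at h0
      rw [hinner] at h1
      linarith
  obtain ⟨g, hgmax⟩ : ∃ g : EuclideanSpace ℝ (Fin n) → EuclideanSpace ℝ (Fin n),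
      ∀ p y : EuclideanSpace ℝ (Fin n), ⟪p, y⟫ - f y ≤ ⟪p, g p⟫ - f (g p) :=
    ⟨fun p => (hexists p).choose, fun p => (hexists p).choose_spec⟩
  have hsub : ∀ p : EuclideanSpace ℝ (Fin n), IsSubgrad f (g p) p := by
    intro p y
    have := hgmax p y
    rw [inner_sub_right]
    linarith
  have hstrong' : ∀ p y : EuclideanSpace ℝ (Fin n), f (g p) + ⟪p, y - g p⟫ + α / 2 * ‖y - g p‖ ^ 2 ≤ f y :=
    fun p => hstrong _ _ (hsub p)
  have hval : ∀ p : EuclideanSpace ℝ (Fin n), fstar p = ⟪p, g p⟫ - f (g p) := by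
    intro p
    refine (hfstar p).unique (IsGreatest.isLUB ⟨⟨g p, rfl⟩, ?_⟩)
    rintro r ⟨x, rfl⟩
    exact hgmax p x
  -- Lipschitz continuity of g
  have hlip : ∀ p q : EuclideanSpace ℝ (Fin n), ‖g p - g q‖ ≤ (1 / α) * ‖p - q‖ := by
    intro p q
    have A := hstrong' p (g q)
    have B := hstrong' q (g p)
    have e1 : ⟪p, g q - g p⟫ = ⟪p, g q⟫ - ⟪p, g p⟫ := inner_sub_right _ _ _
    have e2 : ⟪q, g p - g q⟫ = ⟪q, g p⟫ - ⟪q, g q⟫ := inner_sub_right _ _ _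
    have e3 : ‖g q - g p‖ = ‖g p - g q‖ := norm_sub_rev _ _
    rw [e1] at A
    rw [e2] at B
    rw [e3] at A
    have e4 : ⟪p - q, g p - g q⟫ = ⟪p, g p⟫ - ⟪p, g q⟫ - ⟪q, g p⟫ + ⟪q, g q⟫ := by
      rw [inner_sub_left, inner_sub_right, inner_sub_right]; ring
    have e5 : ⟪p - q, g p - g q⟫ ≤ ‖p - q‖ * ‖g p - g q‖ := real_inner_le_norm _ _
    have key : α * ‖g p - g q‖ ^ 2 ≤ ‖p - q‖ * ‖g p - g q‖ := by
      linarith [A, B, e4, e5]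
    rcases eq_or_lt_of_le (norm_nonneg (g p - g q)) with h | h
    · rw [← h]
      positivity
    · have h6 : α * ‖g p - g q‖ ≤ ‖p - q‖ := by nlinarith
      calc ‖g p - g q‖ = (1 / α) * (α * ‖g p - g q‖) := by field_simp
        _ ≤ (1 / α) * ‖p - q‖ := by
            apply mul_le_mul_of_nonneg_left h6; positivity
  refine ⟨g, ?_, hlip⟩
  intro p
  -- lower and upper bounds for the Bregman-type error
  have low : ∀ q : EuclideanSpace ℝ (Fin n), 0 ≤ fstar q - fstar p - ⟪g p, q - p⟫ := by
    intro q
    have h1 := hub q (g p)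
    have e : ⟪g p, q - p⟫ = ⟪q, g p⟫ - ⟪p, g p⟫ := by
      rw [real_inner_comm, inner_sub_left]
    rw [e, hval p]
    linarith
  have up : ∀ q : EuclideanSpace ℝ (Fin n), fstar q - fstar p - ⟪g p, q - p⟫ ≤ (1 / α) * ‖q - p‖ ^ 2 := by
    intro q
    have hstr := hstrong' p (g q)
    have e1 : ⟪p, g q - g p⟫ = ⟪p, g q⟫ - ⟪p, g p⟫ := inner_sub_right _ _ _
    have e2 : ⟪g p, q - p⟫ = ⟪q, g p⟫ - ⟪p, g p⟫ := by
      rw [real_inner_comm, inner_sub_left]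
    have e3 : ⟪q - p, g q - g p⟫ = ⟪q, g q⟫ - ⟪q, g p⟫ - ⟪p, g q⟫ + ⟪p, g p⟫ := by
      rw [inner_sub_left, inner_sub_right, inner_sub_right]; ring
    have e5 : ⟪q - p, g q - g p⟫ ≤ ‖q - p‖ * ‖g q - g p‖ := real_inner_le_norm _ _
    have e6 : ‖g q - g p‖ ≤ (1 / α) * ‖q - p‖ := hlip q p
    have e7 : ‖q - p‖ * ‖g q - g p‖ ≤ ‖q - p‖ * ((1 / α) * ‖q - p‖) :=
      mul_le_mul_of_nonneg_left e6 (norm_nonneg _)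
    have hsq : (0:ℝ) ≤ α / 2 * ‖g q - g p‖ ^ 2 := by positivity
    have e8 : ‖q - p‖ * ((1 / α) * ‖q - p‖) = (1 / α) * ‖q - p‖ ^ 2 := by ring
    rw [hval p, hval q, e2]
    linarith [hstr, e1, e3, e5, e7, hsq, e8]
  rw [hasGradientAt_iff_isLittleO]
  rw [Asymptotics.isLittleO_iff]
  intro c hc
  rw [Metric.eventually_nhds_iff]
  refine ⟨c * α, by positivity, ?_⟩
  intro q hq
  rw [dist_eq_norm] at hq
  have hb1 := low q
  have hb2 := up q
  have habs : ‖fstar q - fstar p - ⟪g p, q - p⟫‖ ≤ (1 / α) * ‖q - p‖ ^ 2 := by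
    rw [Real.norm_eq_abs, abs_le]
    constructor
    · have : (0:ℝ) ≤ (1 / α) * ‖q - p‖ ^ 2 := by positivity
      linarith
    · linarith
  refine habs.trans ?_
  have hn : (0:ℝ) ≤ ‖q - p‖ := norm_nonneg _
  have h9 : ‖q - p‖ * ‖q - p‖ ≤ (c * α) * ‖q - p‖ := mul_le_mul_of_nonneg_right hq.le hn
  calc (1 / α) * ‖q - p‖ ^ 2 = (1 / α) * (‖q - p‖ * ‖q - p‖) := by ring
    _ ≤ (1 / α) * ((c * α) * ‖q - p‖) := by
        apply mul_le_mul_of_nonneg_left h9; positivity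
    _ = c * ‖q - p‖ := by field_simp
end

section
/- Let C ⊂ ℝⁿ be nonempty closed convex, f continuous and strongly convex, x ∈ ℝⁿ, x* ∈ ∂f(x). A point z ∈ C is the Bregman projection of x onto C with respect to f and x* (i.e., z minimizes y ↦ D^{x*}(x,y) over C) if and only if there exists z* ∈ ∂f(z) with ⟨z* − x*, y − z⟩ ≥ 0 for all y ∈ C. -/
open scoped RealInnerProductSpace

/-- Bregman distance `D^{x*}(x,y) = f(y) − f(x) − ⟨x*, y − x⟩`. -/
def Breg {E : Type*} [NormedAddCommGroup E] [InnerProductSpace ℝ E]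
    (f : E → ℝ) (xs x y : E) : ℝ :=
  f y - f x - ⟪xs, y - x⟫

/-- `z ∈ C` is the Bregman projection of `x` onto a nonempty closed convex `C`
iff there is `z* ∈ ∂f(z)` with `⟨z* − x*, y − z⟩ ≥ 0` for all `y ∈ C`. -/
theorem bregman_projection_characterization {n : ℕ}
    (f : EuclideanSpace ℝ (Fin n) → ℝ)
    (hf : Continuous f) (hconv : ConvexOn ℝ Set.univ f)
    (α : ℝ) (hα : 0 < α)
    (hstrong : ∀ x xs, IsSubgrad f x xs →
      ∀ y, f x + ⟪xs, y - x⟫ + α / 2 * ‖y - x‖ ^ 2 ≤ f y)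
    (C : Set (EuclideanSpace ℝ (Fin n)))
    (hC : C.Nonempty) (hCclosed : IsClosed C) (hCconv : Convex ℝ C)
    (x xs : EuclideanSpace ℝ (Fin n)) (hxs : IsSubgrad f x xs)
    (z : EuclideanSpace ℝ (Fin n)) (hz : z ∈ C) :
    (∀ y ∈ C, Breg f xs x z ≤ Breg f xs x y) ↔
    (∃ zs, IsSubgrad f z zs ∧ ∀ y ∈ C, 0 ≤ ⟪zs - xs, y - z⟫) := by
  set h : EuclideanSpace ℝ (Fin n) → ℝ := fun w => f w - ⟪xs, w⟫ with hh
  have hminh_iff : ∀ y : EuclideanSpace ℝ (Fin n), Breg f xs x y - Breg f xs x z = h y - h z := by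
    intro y
    simp only [Breg, hh, inner_sub_right]
    ring
  constructor
  · intro hmin
    have hminh : ∀ y ∈ C, h z ≤ h y := by
      intro y hy
      have := hmin y hy
      have h2 := hminh_iff y
      linarith
    -- convexity of h
    have hconvh : ConvexOn ℝ Set.univ h := by
      refine ⟨convex_univ, ?_⟩
      intro p _ q _ a b ha hb hab
      have hfc := hconv.2 (Set.mem_univ p) (Set.mem_univ q) ha hb hab
      simp only [hh, smul_eq_mul]
      have : ⟪xs, a • p + b • q⟫ = a * ⟪xs, p⟫ + b * ⟪xs, q⟫ := by
        rw [inner_add_right, real_inner_smul_right, real_inner_smul_right]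
      rw [this]
      simp only [smul_eq_mul] at hfc
      linarith
    have hconth : Continuous h := by
      have : Continuous fun w : EuclideanSpace ℝ (Fin n) => (⟪xs, w⟫ : ℝ) :=
        Continuous.inner continuous_const continuous_id'
      exact hf.sub this
    -- the two sets
    set S : Set (EuclideanSpace ℝ (Fin n) × ℝ) := {p | h p.1 < p.2} with hS
    set T : Set (EuclideanSpace ℝ (Fin n) × ℝ) := C ×ˢ {h z} with hT
    have hSopen : IsOpen S := isOpen_lt (hconth.comp continuous_fst) continuous_snd
    have hSconv : Convex ℝ S := by
      intro p hp q hq a b ha hb hab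
      simp only [hS, Set.mem_setOf_eq] at hp hq ⊢
      have := hconvh.2 (Set.mem_univ p.1) (Set.mem_univ q.1) ha hb hab
      simp only [smul_eq_mul] at this
      have hab' : 0 < a ∨ 0 < b := by
        rcases lt_or_eq_of_le ha with h | h
        · exact Or.inl h
        · right; rw [← h] at hab; linarith
      have key : a * h p.1 + b * h q.1 < a * p.2 + b * q.2 := by
        rcases hab' with h1 | h1
        · have := mul_lt_mul_of_pos_left hp h1
          have hb2 : b * h q.1 ≤ b * q.2 := mul_le_mul_of_nonneg_left hq.le hb
          linarith
        · have := mul_lt_mul_of_pos_left hq h1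
          have ha2 : a * h p.1 ≤ a * p.2 := mul_le_mul_of_nonneg_left hp.le ha
          linarith
      calc h (a • p + b • q).1 = h (a • p.1 + b • q.1) := rfl
        _ ≤ a * h p.1 + b * h q.1 := this
        _ < a * p.2 + b * q.2 := key
        _ = (a • p + b • q).2 := rfl
    have hTconv : Convex ℝ T := hCconv.prod (convex_singleton _)
    have hdisj : Disjoint S T := by
      rw [Set.disjoint_left]
      rintro ⟨w, t⟩ hw hwT
      simp only [hT, Set.mem_prod, Set.mem_singleton_iff] at hwT
      have : h z ≤ h w := hminh w hwT.1
      simp only [hS, Set.mem_setOf_eq] at hw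
      rw [hwT.2] at hw
      linarith
    obtain ⟨L, u, hLS, hLT⟩ := geometric_hahn_banach_open hSconv hSopen hTconv hdisj
    set a : ℝ := L (0, 1) with haL
    have hLsplit : ∀ (w : EuclideanSpace ℝ (Fin n)) (t : ℝ), L (w, t) = L (w, 0) + t * a := by
      intro w t
      have : ((w, t) : EuclideanSpace ℝ (Fin n) × ℝ) = (w, 0) + t • ((0 : EuclideanSpace ℝ (Fin n)), (1 : ℝ)) := by
        simp [Prod.ext_iff]
      rw [this, map_add, map_smul, smul_eq_mul]
    have hSin : ∀ (w : EuclideanSpace ℝ (Fin n)) (t : ℝ), h w < t → L (w, 0) + t * a < u := by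
      intro w t hwt
      have : ((w, t) : EuclideanSpace ℝ (Fin n) × ℝ) ∈ S := hwt
      have := hLS _ this
      rwa [hLsplit] at this
    have hTin : ∀ y ∈ C, u ≤ L (y, 0) + h z * a := by
      intro y hy
      have : ((y, h z) : EuclideanSpace ℝ (Fin n) × ℝ) ∈ T := by
        simp [hT, hy]
      have := hLT _ this
      rwa [hLsplit] at this
    -- a ≤ 0
    have ha_le : a ≤ 0 := by
      by_contra hpos
      push_neg at hpos
      have h1 := hSin z (h z + 1) (by linarith)
      have hexp1 : (h z + 1) * a = h z * a + a := by ring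
      set t : ℝ := (u - L (z, 0) - h z * a) / a + 1 with ht
      have hdiv : (u - L (z, 0) - h z * a) / a * a = u - L (z, 0) - h z * a :=
        div_mul_cancel₀ _ (ne_of_gt hpos)
      have htA : t * a = u - L (z, 0) - h z * a + a := by
        rw [ht, add_mul, hdiv, one_mul]
      have htpos : h z < h z + t := by
        have hdp : 0 < (u - L (z, 0) - h z * a) / a := by
          rw [lt_div_iff₀ hpos]; linarith
        simp only [ht]; linarith
      have h2 := hSin z (h z + t) htpos
      have hexp2 : (h z + t) * a = h z * a + t * a := by ring
      linarith
    -- a < 0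
    have haneg : a < 0 := by
      rcases lt_or_eq_of_le ha_le with hlt0 | heq
      · exact hlt0
      · exfalso
        have heq' : a = 0 := heq
        have hbdd : ∀ w : EuclideanSpace ℝ (Fin n), L (w, 0) < u := by
          intro w
          have hthis := hSin w (h w + 1) (by linarith)
          rw [heq', mul_zero, add_zero] at hthis
          exact hthis
        have hzero : ∀ w : EuclideanSpace ℝ (Fin n), L (w, 0) = 0 := by
          intro w
          by_contra hne
          rcases lt_or_gt_of_ne hne with hlt | hgt
          · have := hbdd ((u / L (w, 0) - 1) • w)
            have hsm : L ((u / L (w, 0) - 1) • w, 0) = (u / L (w, 0) - 1) * L (w, 0) := by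
              have : (((u / L (w, 0) - 1) • w, (0 : ℝ)) : EuclideanSpace ℝ (Fin n) × ℝ)
                  = (u / L (w, 0) - 1) • (w, (0 : ℝ)) := by simp [Prod.ext_iff]
              rw [this, map_smul, smul_eq_mul]
            rw [hsm] at this
            have hdc : u / L (w, 0) * L (w, 0) = u := div_mul_cancel₀ _ (ne_of_lt hlt)
            nlinarith
          · have := hbdd ((u / L (w, 0) + 1) • w)
            have hsm : L ((u / L (w, 0) + 1) • w, 0) = (u / L (w, 0) + 1) * L (w, 0) := by
              have : (((u / L (w, 0) + 1) • w, (0 : ℝ)) : EuclideanSpace ℝ (Fin n) × ℝ)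
                  = (u / L (w, 0) + 1) • (w, (0 : ℝ)) := by simp [Prod.ext_iff]
              rw [this, map_smul, smul_eq_mul]
            rw [hsm] at this
            have hdc : u / L (w, 0) * L (w, 0) = u := div_mul_cancel₀ _ (ne_of_gt hgt)
            nlinarith
        obtain ⟨y0, hy0⟩ := hC
        have h1 := hTin y0 hy0
        rw [hzero y0, heq', mul_zero, add_zero] at h1
        have h2 := hbdd z
        rw [hzero z] at h2
        linarith
    -- limit: for all w, L(w,0) + h w * a ≤ u
    have hSle : ∀ w : EuclideanSpace ℝ (Fin n), L (w, 0) + h w * a ≤ u := by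
      intro w
      by_contra hlt
      push_neg at hlt
      set ε : ℝ := (L (w, 0) + h w * a - u) / (-a) with hε
      have hεpos : 0 < ε := div_pos (by linarith) (by linarith)
      have := hSin w (h w + ε) (by linarith)
      have hcalc : ε * (-a) = L (w, 0) + h w * a - u :=
        div_mul_cancel₀ _ (by linarith : (-a) ≠ 0)
      nlinarith
    -- Riesz representation of w ↦ L (w, 0)
    set L1 : EuclideanSpace ℝ (Fin n) →L[ℝ] ℝ := L.comp (ContinuousLinearMap.inl ℝ (EuclideanSpace ℝ (Fin n)) ℝ) with hL1
    set p : EuclideanSpace ℝ (Fin n) := (InnerProductSpace.toDual ℝ (EuclideanSpace ℝ (Fin n))).symm L1 with hpdef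
    have hp : ∀ w : EuclideanSpace ℝ (Fin n), ⟪p, w⟫ = L (w, 0) := by
      intro w
      rw [hpdef]
      exact InnerProductSpace.toDual_symm_apply
    have hna : (0 : ℝ) < -a := by linarith
    refine ⟨xs + (-a)⁻¹ • p, ?_, ?_⟩
    · -- subgradient property
      intro y
      have h1 := hSle y
      have h2 := hTin z hz
      -- L(y,0) + h y * a ≤ L(z,0) + h z * a
      have h3 : L (y, 0) + h y * a ≤ L (z, 0) + h z * a := le_trans h1 h2
      have hinner : ⟪xs + (-a)⁻¹ • p, y - z⟫
          = (⟪xs, y⟫ - ⟪xs, z⟫) + (-a)⁻¹ * (L (y, 0) - L (z, 0)) := by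
        rw [inner_add_left, real_inner_smul_left, inner_sub_right, inner_sub_right, hp, hp]
      rw [hinner]
      have hkey : (-a)⁻¹ * (L (y, 0) - L (z, 0)) ≤ h y - h z := by
        rw [inv_mul_le_iff₀ hna]
        nlinarith
      simp only [hh] at hkey
      linarith
    · -- variational inequality
      intro y hy
      have h1 := hSle z
      have h2 := hTin y hy
      have h3 : L (z, 0) ≤ L (y, 0) := by linarith
      have hinner : ⟪xs + (-a)⁻¹ • p - xs, y - z⟫
          = (-a)⁻¹ * (L (y, 0) - L (z, 0)) := by
        have : xs + (-a)⁻¹ • p - xs = (-a)⁻¹ • p := by abel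
        rw [this, real_inner_smul_left, inner_sub_right, hp, hp]
      rw [hinner]
      exact mul_nonneg (inv_pos.2 hna).le (by linarith)
  · rintro ⟨zs, hzs, hvi⟩ y hy
    have h1 := hzs y
    have h2 := hvi y hy
    have h3 := hminh_iff y
    rw [inner_sub_left, inner_sub_right, inner_sub_right] at h2
    rw [inner_sub_right] at h1
    simp only [hh] at h3
    linarith
end

section
/- With z = Π_C^{x*}(x) the Bregman projection of x onto a nonempty closed convex set C and z* ∈ ∂f(z) an admissible subgradient (satisfying ⟨z* − x*, y − z⟩ ≥ 0 on C), one has D^{z*}(z,y) ≤ D^{x*}(x,y) − D^{x*}(x,z) for all y ∈ C. -/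
open scoped RealInnerProductSpace

/-- For the Bregman projection `z` of `x` onto `C` with admissible subgradient
`z* ∈ ∂f(z)`, one has `D^{z*}(z,y) ≤ D^{x*}(x,y) − D^{x*}(x,z)` for all `y ∈ C`. -/
theorem bregman_projection_three_point {n : ℕ}
    (f : EuclideanSpace ℝ (Fin n) → ℝ)
    (hf : Continuous f) (hconv : ConvexOn ℝ Set.univ f)
    (α : ℝ) (hα : 0 < α)
    (hstrong : ∀ x xs, IsSubgrad f x xs →
      ∀ y, f x + ⟪xs, y - x⟫ + α / 2 * ‖y - x‖ ^ 2 ≤ f y)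
    (C : Set (EuclideanSpace ℝ (Fin n)))
    (hC : C.Nonempty) (hCclosed : IsClosed C) (hCconv : Convex ℝ C)
    (x xs : EuclideanSpace ℝ (Fin n)) (hxs : IsSubgrad f x xs)
    (z zs : EuclideanSpace ℝ (Fin n)) (hz : z ∈ C)
    (hproj : ∀ y ∈ C, Breg f xs x z ≤ Breg f xs x y)
    (hzs : IsSubgrad f z zs)
    (hadm : ∀ y ∈ C, 0 ≤ ⟪zs - xs, y - z⟫) :
    ∀ y ∈ C, Breg f zs z y ≤ Breg f xs x y - Breg f xs x z := by
  intro y hy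
  have h := hadm y hy
  have key : Breg f xs x y - Breg f xs x z - Breg f zs z y = ⟪zs - xs, y - z⟫ := by
    simp only [Breg, inner_sub_left, inner_sub_right]
    ring
  linarith
end

section
/- Let A ∈ ℝ^{m×n} have full row rank, b ∈ ℝᵐ, L(A,b) = {x : Ax = b}, and let f be continuous and strongly convex. For x ∈ ℝⁿ and x* ∈ ∂f(x), the function g(w) = f*(x* − Aᵀw) + ⟨w, b⟩ attains its minimum at some ŵ ∈ ℝᵐ, and z := ∇f*(x* − Aᵀŵ) is the Bregman projection of x onto L(A,b), with z* := x* − Aᵀŵ ∈ ∂f(z) an admissible subgradient. -/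
open scoped RealInnerProductSpace

/-- A continuous function eventually above its value at 0 attains a global min. -/
lemma exists_global_min {E : Type*} [NormedAddCommGroup E] [InnerProductSpace ℝ E]
    [FiniteDimensional ℝ E] (h : E → ℝ) (hc : Continuous h) (R : ℝ)
    (hR : ∀ y, R ≤ ‖y‖ → h 0 ≤ h y) : ∃ z, ∀ y, h z ≤ h y := by
  have hcomp : IsCompact (Metric.closedBall (0 : E) (max R 0)) := isCompact_closedBall _ _
  obtain ⟨z, hzmem, hzmin⟩ := hcomp.exists_isMinOn ⟨0, by simp [le_max_right]⟩ hc.continuousOn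
  refine ⟨z, fun y => ?_⟩
  by_cases hy : ‖y‖ ≤ max R 0
  · exact hzmin (by simpa [Metric.mem_closedBall, dist_zero_right] using hy)
  · have h0 : h z ≤ h 0 := hzmin (by simp [le_max_right])
    exact h0.trans (hR y (le_trans (le_max_left _ _) (le_of_not_ge hy)))

/-- Derivative at a global minimum vanishes. -/
lemma deriv_zero_of_min (φ : ℝ → ℝ) (c : ℝ) (hd : HasDerivAt φ c 0)
    (hm : ∀ t, φ 0 ≤ φ t) : c = 0 :=
  IsLocalMin.hasDerivAt_eq_zero (Filter.Eventually.of_forall hm) hd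

/-- Directional derivative from a gradient. -/
lemma dir_deriv {E : Type*} [NormedAddCommGroup E] [InnerProductSpace ℝ E] [CompleteSpace E]
    (fstar : E → ℝ) (g : E) (u : E) (hgrad : HasGradientAt fstar g u) (d : E) :
    HasDerivAt (fun t : ℝ => fstar (u + t • d)) ⟪g, d⟫ 0 := by
  have h1 : HasDerivAt (fun t : ℝ => u + t • d) d 0 := by
    simpa using ((hasDerivAt_id (0 : ℝ)).smul_const d).const_add u
  have hu : u + (0:ℝ) • d = u := by simp
  have h2' : HasFDerivAt fstar ((InnerProductSpace.toDual ℝ E) g) (u + (0:ℝ) • d) := by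
    rw [hu]; exact hgrad.hasFDerivAt
  have h2 := h2'.comp_hasDerivAt (f := fun t : ℝ => u + t • d) 0 h1
  simpa [Function.comp_def, InnerProductSpace.toDual_apply_apply] using h2

lemma grad_subgrad {E : Type*} [NormedAddCommGroup E] [InnerProductSpace ℝ E]
    [FiniteDimensional ℝ E]
    (f : E → ℝ) (hf : Continuous f) (α : ℝ) (hα : 0 < α) (x xs : E)
    (hsx : ∀ y, f x + ⟪xs, y - x⟫ + α / 2 * ‖y - x‖ ^ 2 ≤ f y)
    (fstar : E → ℝ) (hfstar : ∀ v, IsLUB {r : ℝ | ∃ x, r = ⟪v, x⟫ - f x} (fstar v))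
    (gradfstar : E → E) (hgrad : ∀ v, HasGradientAt fstar (gradfstar v) v)
    (u : E) : IsSubgrad f (gradfstar u) u := by
  classical
  set K := ‖xs - u‖ with hK
  set C := f x - ⟪xs, x⟫ with hC
  set M := K + |f 0 - C| + K * ‖x‖ + 1 with hM
  have hKnn : 0 ≤ K := norm_nonneg _
  have hMK : 0 ≤ M - K := by
    have := abs_nonneg (f 0 - C)
    have := mul_nonneg hKnn (norm_nonneg x)
    simp only [hM]; linarith
  have hcont : Continuous (fun y : E => f y - ⟪u, y⟫) :=
    hf.sub (continuous_const.inner continuous_id)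
  have hcoer : ∀ y : E, ‖x‖ + 1 + (2/α) * M ≤ ‖y‖ →
      (fun y : E => f y - ⟪u, y⟫) 0 ≤ (fun y : E => f y - ⟪u, y⟫) y := by
    intro y hy
    simp only
    have h1 := hsx y
    have h2 : -(K * ‖y‖) ≤ ⟪xs - u, y⟫ := by
      have := abs_real_inner_le_norm (xs - u) y
      have := neg_abs_le ⟪xs - u, y⟫
      linarith
    have h3 : (‖y‖ - ‖x‖) ^ 2 ≤ ‖y - x‖ ^ 2 := by
      refine sq_le_sq' ?_ (norm_sub_norm_le y x)
      have := norm_sub_norm_le x y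
      rw [norm_sub_rev] at this
      linarith
    have h4 : ⟪xs, y - x⟫ = ⟪xs, y⟫ - ⟪xs, x⟫ := inner_sub_right xs y x
    have h5 : ⟪xs, y⟫ - ⟪u, y⟫ = ⟪xs - u, y⟫ := (inner_sub_left xs u y).symm
    have h6 : ⟪u, (0:E)⟫ = (0:ℝ) := inner_zero_right u
    have hpos : (0:ℝ) ≤ 2/α * M := by positivity
    have hs1 : 1 ≤ ‖y‖ - ‖x‖ := by linarith
    have hs : 2/α * M ≤ ‖y‖ - ‖x‖ := by linarith
    have k1 : M ≤ α/2 * (‖y‖ - ‖x‖) := by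
      have h := mul_le_mul_of_nonneg_left hs (le_of_lt (by positivity : (0:ℝ) < α/2))
      have heq : α/2 * (2/α * M) = M := by field_simp
      linarith
    have key : M * (‖y‖ - ‖x‖) ≤ α/2 * (‖y‖ - ‖x‖) ^ 2 := by nlinarith
    have h7 : α/2 * (‖y‖ - ‖x‖) ^ 2 ≤ α/2 * ‖y - x‖ ^ 2 :=
      mul_le_mul_of_nonneg_left h3 (by positivity)
    have h8 : (M - K) * 1 ≤ (M - K) * (‖y‖ - ‖x‖) :=
      mul_le_mul_of_nonneg_left hs1 hMK
    have h9 : f 0 - C ≤ |f 0 - C| := le_abs_self _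
    simp only [hM] at h8
    simp only [hC] at h9 ⊢
    nlinarith [mul_nonneg hKnn (norm_nonneg y)]
  obtain ⟨z, hz⟩ := exists_global_min (fun y : E => f y - ⟪u, y⟫) hcont _ hcoer
  have hub : ∀ y : E, ⟪u, y⟫ - f y ≤ fstar u := fun y => (hfstar u).1 ⟨y, rfl⟩
  have hfu : fstar u = ⟪u, z⟫ - f z := by
    refine le_antisymm ((hfstar u).2 ?_) ((hfstar u).1 ⟨z, rfl⟩)
    rintro r ⟨y, rfl⟩
    have := hz y
    linarith
  have hsub : IsSubgrad f z u := by
    intro y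
    have h1 := hub y
    rw [inner_sub_right]
    linarith
  have hzgrad : gradfstar u = z := by
    have hd : ∀ d : E, ⟪gradfstar u, d⟫ = ⟪z, d⟫ := by
      intro d
      have hlin : HasDerivAt (fun t : ℝ => t * ⟪z, d⟫) ⟪z, d⟫ 0 := by
        simpa using (hasDerivAt_id (0:ℝ)).mul_const ⟪z, d⟫
      have hφ : HasDerivAt (fun t : ℝ => fstar (u + t • d) - t * ⟪z, d⟫)
          (⟪gradfstar u, d⟫ - ⟪z, d⟫) 0 :=
        (dir_deriv fstar _ u (hgrad u) d).sub hlin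
      have hmin : ∀ t : ℝ, fstar (u + (0:ℝ) • d) - (0:ℝ) * ⟪z, d⟫ ≤
          fstar (u + t • d) - t * ⟪z, d⟫ := by
        intro t
        have h1 : ⟪u + t • d, z⟫ - f z ≤ fstar (u + t • d) := (hfstar _).1 ⟨z, rfl⟩
        have h2 : ⟪u + t • d, z⟫ = ⟪u, z⟫ + t * ⟪d, z⟫ := by
          rw [inner_add_left, real_inner_smul_left]
        have h3 : ⟪d, z⟫ = ⟪z, d⟫ := real_inner_comm z d
        have h4 : u + (0:ℝ) • d = u := by simp
        rw [h4]
        simp only [zero_mul, sub_zero]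
        rw [hfu]
        rw [h2, h3] at h1
        linarith
      have := deriv_zero_of_min _ _ hφ (fun t => by simpa using hmin t)
      linarith
    have hall : ∀ d : E, ⟪gradfstar u - z, d⟫ = (0:ℝ) := by
      intro d
      rw [inner_sub_left]
      have := hd d
      linarith
    have h0 := hall (gradfstar u - z)
    rw [real_inner_self_eq_norm_sq] at h0
    have : gradfstar u - z = 0 := by
      have := sq_eq_zero_iff.mp h0.symm.symm
      · exact norm_eq_zero.mp (by nlinarith [norm_nonneg (gradfstar u - z), sq_nonneg ‖gradfstar u - z‖])
    exact sub_eq_zero.mp this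
  rw [hzgrad]; exact hsub

set_option maxHeartbeats 1000000 in
/-- For `A` with full row rank and `b ∈ ℝᵐ`, the function
`g(w) = f*(x* − Aᵀw) + ⟨w, b⟩` attains its minimum at some `ŵ`, and
`z := ∇f*(x* − Aᵀŵ)` is the Bregman projection of `x` onto `L(A,b) = {x : Ax = b}`
with admissible subgradient `z* := x* − Aᵀŵ ∈ ∂f(z)`. -/
theorem bregman_projection_affine {n m : ℕ}
    (f : EuclideanSpace ℝ (Fin n) → ℝ)
    (hf : Continuous f) (hconv : ConvexOn ℝ Set.univ f)
    (α : ℝ) (hα : 0 < α)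
    (hstrong : ∀ x xs, IsSubgrad f x xs →
      ∀ y, f x + ⟪xs, y - x⟫ + α / 2 * ‖y - x‖ ^ 2 ≤ f y)
    (fstar : EuclideanSpace ℝ (Fin n) → ℝ)
    (hfstar : ∀ xs, IsLUB {r : ℝ | ∃ x, r = ⟪xs, x⟫ - f x} (fstar xs))
    (gradfstar : EuclideanSpace ℝ (Fin n) → EuclideanSpace ℝ (Fin n))
    (hgrad : ∀ xs, HasGradientAt fstar (gradfstar xs) xs)
    (A : EuclideanSpace ℝ (Fin n) →L[ℝ] EuclideanSpace ℝ (Fin m))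
    (hA : Function.Surjective A)   -- full row rank
    (b : EuclideanSpace ℝ (Fin m))
    (x xs : EuclideanSpace ℝ (Fin n)) (hxs : IsSubgrad f x xs) :
    ∃ what : EuclideanSpace ℝ (Fin m),
      (∀ w, fstar (xs - ContinuousLinearMap.adjoint A what) + ⟪what, b⟫ ≤
            fstar (xs - ContinuousLinearMap.adjoint A w) + ⟪w, b⟫) ∧
      (let zs := xs - ContinuousLinearMap.adjoint A what
       let z := gradfstar zs
       A z = b ∧ IsSubgrad f z zs ∧
       (∀ y, A y = b → Breg f xs x z ≤ Breg f xs x y) ∧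
       (∀ y, A y = b → 0 ≤ ⟪zs - xs, y - z⟫)) := by
  classical
  set T := ContinuousLinearMap.adjoint A with hTdef
  obtain ⟨x₀, hx₀⟩ := hA b
  -- bound of f on the unit ball around x₀
  obtain ⟨p, hpmem, hpmax⟩ := (isCompact_closedBall x₀ 1).exists_isMaxOn ⟨x₀, by simp⟩
    hf.continuousOn
  set Mf := f p with hMfdef
  have hMf : ∀ d : EuclideanSpace ℝ (Fin n), ‖d‖ ≤ 1 → f (x₀ + d) ≤ Mf := by
    intro d hd
    exact hpmax (by simpa [Metric.mem_closedBall, dist_eq_norm] using hd)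
  -- adjoint is injective, hence antilipschitz
  have hTinj : Function.Injective T := by
    intro w1 w2 hw
    have key : ∀ v, ⟪w1 - w2, A v⟫ = (0:ℝ) := by
      intro v
      have h0 : T (w1 - w2) = 0 := by rw [map_sub, hw, sub_self]
      have h2 := ContinuousLinearMap.adjoint_inner_left A v (w1 - w2)
      rw [← hTdef, h0] at h2
      simpa using h2.symm
    obtain ⟨v, hv⟩ := hA (w1 - w2)
    have := key v
    rw [hv, inner_self_eq_zero] at this
    exact sub_eq_zero.mp this
  obtain ⟨Kc, -, hKc⟩ := (LinearMap.injective_iff_antilipschitz T.toLinearMap).mp hTinj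
  have hKle : ∀ w, ‖w‖ ≤ Kc * ‖T w‖ := fun w => by
    simpa [dist_zero_right] using hKc.le_mul_dist w 0
  -- the dual objective g
  set g := fun w : EuclideanSpace ℝ (Fin m) => fstar (xs - T w) + ⟪w, b⟫ with hgdef
  have hfstarcont : Continuous fstar :=
    continuous_iff_continuousAt.mpr fun v => (hgrad v).hasFDerivAt.continuousAt
  have hgcont : Continuous g :=
    (hfstarcont.comp (continuous_const.sub T.continuous)).add
      (continuous_id.inner continuous_const)
  set C₁ := ⟪xs, x₀⟫ - ‖xs‖ - Mf with hC₁def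
  have hlow : ∀ w, ‖T w‖ + C₁ ≤ g w := by
    intro w
    set d := -(‖T w‖⁻¹ • T w) with hddef
    have hdn : ‖d‖ ≤ 1 := by
      rw [hddef, norm_neg, norm_smul]
      by_cases h0 : T w = 0
      · simp [h0]
      · rw [norm_inv, norm_norm]
        rw [inv_mul_cancel₀ (norm_ne_zero_iff.mpr h0)]
    have hip : ⟪T w, d⟫ = -‖T w‖ := by
      rw [hddef, inner_neg_right, real_inner_smul_right, real_inner_self_eq_norm_sq]
      by_cases h0 : T w = 0
      · simp [h0]
      · have hne : ‖T w‖ ≠ 0 := norm_ne_zero_iff.mpr h0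
        field_simp
    have helem : ⟪xs - T w, x₀ + d⟫ - f (x₀ + d) ≤ fstar (xs - T w) := (hfstar _).1 ⟨x₀ + d, rfl⟩
    have hTx₀ : ⟪T w, x₀⟫ = ⟪w, b⟫ := by
      rw [hTdef, ContinuousLinearMap.adjoint_inner_left, hx₀]
    have hexp : ⟪xs - T w, x₀ + d⟫ = ⟪xs, x₀⟫ + ⟪xs, d⟫ - ⟪w, b⟫ + ‖T w‖ := by
      rw [inner_sub_left, inner_add_right, inner_add_right, hTx₀, hip]
      ring
    have hxsd : -‖xs‖ ≤ ⟪xs, d⟫ := by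
      have h1 := abs_real_inner_le_norm xs d
      have h2 : ‖xs‖ * ‖d‖ ≤ ‖xs‖ * 1 := mul_le_mul_of_nonneg_left hdn (norm_nonneg xs)
      have h3 := neg_abs_le ⟪xs, d⟫
      linarith
    have hfb := hMf d hdn
    simp only [hgdef, hC₁def]
    rw [hexp] at helem
    linarith
  -- coercivity of g
  have hcoer : ∀ w, (|g 0 - C₁| + 1) * Kc + 1 ≤ ‖w‖ → g 0 ≤ g w := by
    intro w hw
    have h1 := hKle w
    have h2 := hlow w
    have h3 : (0:ℝ) ≤ (Kc:ℝ) := Kc.coe_nonneg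
    have h4 := le_abs_self (g 0 - C₁)
    nlinarith [norm_nonneg (T w), abs_nonneg (g 0 - C₁)]
  obtain ⟨what, hwhat⟩ := exists_global_min g hgcont _ hcoer
  -- subgradient property of z
  have hsubz : IsSubgrad f (gradfstar (xs - T what)) (xs - T what) :=
    grad_subgrad f hf α hα x xs (hstrong x xs hxs) fstar hfstar gradfstar hgrad _
  set z := gradfstar (xs - T what) with hzdef
  -- A z = b via vanishing derivative of g at the minimizer
  have hAz : A z = b := by
    have hdirv : ∀ v, ⟪b - A z, v⟫ = (0:ℝ) := by
      intro v
      have hlin : HasDerivAt (fun t : ℝ => ⟪what + t • v, b⟫) ⟪v, b⟫ 0 := by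
        have hfe : (fun t : ℝ => ⟪what + t • v, b⟫) = fun t => ⟪what, b⟫ + t * ⟪v, b⟫ := by
          funext t; rw [inner_add_left, real_inner_smul_left]
        rw [hfe]
        simpa using ((hasDerivAt_id (0:ℝ)).mul_const ⟪v, b⟫).const_add ⟪what, b⟫
      have hfd : HasDerivAt (fun t : ℝ => fstar ((xs - T what) + t • (-(T v))) + ⟪what + t • v, b⟫)
          _ 0 := (dir_deriv fstar (gradfstar (xs - T what)) (xs - T what)
        (hgrad (xs - T what)) (-(T v))).add hlin
      have hfun : (fun t : ℝ => fstar ((xs - T what) + t • (-(T v))) + ⟪what + t • v, b⟫)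
          = fun t => g (what + t • v) := by
        funext t
        simp only [hgdef]
        congr 2
        rw [map_add, map_smul, smul_neg]
        abel
      rw [hfun] at hfd
      have h0 := deriv_zero_of_min _ _ hfd fun t => by simpa using hwhat (what + t • v)
      have e1 : ⟪gradfstar (xs - T what), -(T v)⟫ = -⟪A z, v⟫ := by
        rw [inner_neg_right, ← hzdef, hTdef, ContinuousLinearMap.adjoint_inner_right]
      have e2 : ⟪v, b⟫ = ⟪b, v⟫ := real_inner_comm b v
      rw [e1, e2] at h0
      rw [inner_sub_left]
      linarith
    have h := hdirv (b - A z)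
    rw [inner_self_eq_zero] at h
    exact (sub_eq_zero.mp h).symm
  -- admissibility inner product vanishes
  have hadm : ∀ y, A y = b → ⟪(xs - T what) - xs, y - z⟫ = (0:ℝ) := by
    intro y hy
    have he : (xs - T what) - xs = -(T what) := by abel
    rw [he, inner_neg_left, hTdef, ContinuousLinearMap.adjoint_inner_left, map_sub, hy, hAz,
      sub_self, inner_zero_right, neg_zero]
  -- Bregman projection property
  have hproj : ∀ y, A y = b → Breg f xs x z ≤ Breg f xs x y := by
    intro y hy
    have h1 := hsubz y
    have h2 := hadm y hy
    simp only [Breg]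
    have e : ⟪(xs - T what), y - z⟫ = ⟪xs, y - z⟫ := by
      have h3 := inner_sub_left (𝕜 := ℝ) (xs - T what) xs (y - z)
      rw [h2] at h3
      linarith
    have a1 : ⟪xs, y - x⟫ = ⟪xs, y⟫ - ⟪xs, x⟫ := inner_sub_right xs y x
    have a2 : ⟪xs, z - x⟫ = ⟪xs, z⟫ - ⟪xs, x⟫ := inner_sub_right xs z x
    have a3 : ⟪xs, y - z⟫ = ⟪xs, y⟫ - ⟪xs, z⟫ := inner_sub_right xs y z
    rw [e, a3] at h1
    rw [a1, a2]
    linarith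
  exact ⟨what, fun w => hwhat w, hAz, hsubz, hproj, fun y hy => le_of_eq (hadm y hy).symm⟩
end

section
/- In the setting of the Bregman projection z onto the affine subspace L(A,b) with admissible subgradient z* = x* − Aᵀŵ, the estimate D^{z*}(z,y) ≤ D^{x*}(x,y) − (α/2)‖(AAᵀ)^{−1/2}(Ax − b)‖₂² holds for all y ∈ L(A,b). -/
open scoped RealInnerProductSpace

/-- For the Bregman projection `z = ∇f*(x* − Aᵀŵ)` of `x` onto `L(A,b)`
with admissible subgradient `z* = x* − Aᵀŵ`, one has for all `y ∈ L(A,b)`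
`D^{z*}(z,y) ≤ D^{x*}(x,y) − (α/2)‖(AAᵀ)^{−1/2}(Ax − b)‖²`, where
`‖(AAᵀ)^{−1/2}u‖² = ⟨(AAᵀ)⁻¹u, u⟩` and `(AAᵀ)⁻¹` is the inverse `Binv` of `A Aᵀ`. -/
theorem bregman_projection_affine_decrease {n m : ℕ}
    (f : EuclideanSpace ℝ (Fin n) → ℝ)
    (hf : Continuous f) (hconv : ConvexOn ℝ Set.univ f)
    (α : ℝ) (hα : 0 < α)
    (hstrong : ∀ x xs, IsSubgrad f x xs →
      ∀ y, f x + ⟪xs, y - x⟫ + α / 2 * ‖y - x‖ ^ 2 ≤ f y)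
    (fstar : EuclideanSpace ℝ (Fin n) → ℝ)
    (hfstar : ∀ xs, IsLUB {r : ℝ | ∃ x, r = ⟪xs, x⟫ - f x} (fstar xs))
    (gradfstar : EuclideanSpace ℝ (Fin n) → EuclideanSpace ℝ (Fin n))
    (hgrad : ∀ xs, HasGradientAt fstar (gradfstar xs) xs)
    (A : EuclideanSpace ℝ (Fin n) →L[ℝ] EuclideanSpace ℝ (Fin m))
    (hA : Function.Surjective A)   -- full row rank
    (Binv : EuclideanSpace ℝ (Fin m) →L[ℝ] EuclideanSpace ℝ (Fin m))
    (hBinv₁ : ∀ u, A (ContinuousLinearMap.adjoint A (Binv u)) = u)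
    (hBinv₂ : ∀ u, Binv (A (ContinuousLinearMap.adjoint A u)) = u)
    (b : EuclideanSpace ℝ (Fin m))
    (x xs : EuclideanSpace ℝ (Fin n)) (hxs : IsSubgrad f x xs)
    (what : EuclideanSpace ℝ (Fin m))
    (hwhat : ∀ w, fstar (xs - ContinuousLinearMap.adjoint A what) + ⟪what, b⟫ ≤
                  fstar (xs - ContinuousLinearMap.adjoint A w) + ⟪w, b⟫)
    (zs z : EuclideanSpace ℝ (Fin n))
    (hzs : zs = xs - ContinuousLinearMap.adjoint A what)
    (hz : z = gradfstar zs) :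
    ∀ y, A y = b →
      Breg f zs z y ≤ Breg f xs x y - α / 2 * ⟪Binv (A x - b), A x - b⟫ := by
  intro y hy
  set A' := ContinuousLinearMap.adjoint A with hA'
  set u : EuclideanSpace ℝ (Fin m) := A x - b with hu
  set Q : ℝ := ⟪Binv u, u⟫ with hQ
  set w : EuclideanSpace ℝ (Fin m) := α • Binv u with hw
  -- Step A: fstar xs ≤ ⟪xs, x⟫ - f x  (from xs ∈ ∂f(x))
  have stepA : fstar xs ≤ ⟪xs, x⟫ - f x := by
    apply (hfstar xs).2
    rintro r ⟨y', rfl⟩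
    have h1 := hxs y'
    have h2 : (⟪xs, y' - x⟫ : ℝ) = ⟪xs, y'⟫ - ⟪xs, x⟫ := inner_sub_right xs y' x
    linarith
  -- Step B: ⟪zs, z⟫ - f z ≤ fstar zs
  have stepB : ⟪zs, z⟫ - f z ≤ fstar zs := (hfstar zs).1 ⟨z, rfl⟩
  -- Step C: smoothness of fstar around xs
  have stepC : ∀ p, fstar p ≤ ⟪p, x⟫ - f x + 1/(2*α) * ‖p - xs‖^2 := by
    intro p
    apply (hfstar p).2
    rintro r ⟨y', rfl⟩
    have h1 := hstrong x xs hxs y'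
    have h2 : (⟪p - xs, y' - x⟫ : ℝ) ≤ 1/(2*α) * ‖p - xs‖^2 + α/2 * ‖y' - x‖^2 := by
      have hc := real_inner_le_norm (p - xs) (y' - x)
      have h0 : 0 ≤ 1/(2*α) * (‖p - xs‖ - α * ‖y' - x‖)^2 := by positivity
      have e : 1/(2*α) * ‖p - xs‖^2 + α/2 * ‖y' - x‖^2 - ‖p - xs‖ * ‖y' - x‖
          = 1/(2*α) * (‖p - xs‖ - α * ‖y' - x‖)^2 := by
        field_simp; ring
      linarith
    have h3 : (⟪p, y'⟫ : ℝ) = ⟪p - xs, y' - x⟫ + ⟪xs, y' - x⟫ + ⟪p, x⟫ := by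
      simp only [inner_sub_left, inner_sub_right]; ring
    linarith
  -- adjoint facts
  have hAAw : A (A' w) = α • u := by
    rw [hw, map_smul, map_smul, hBinv₁]
  have hnormAw : ‖A' w‖^2 = α^2 * Q := by
    rw [← real_inner_self_eq_norm_sq]
    have : (⟪A' w, A' w⟫ : ℝ) = ⟪w, A (A' w)⟫ := ContinuousLinearMap.adjoint_inner_left A (A' w) w
    rw [this, hAAw, hw, real_inner_smul_left, real_inner_smul_right]
    ring
  have hwu : (⟪w, u⟫ : ℝ) = α * Q := by
    rw [hw, real_inner_smul_left]
  -- inner products against y and x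
  have hAy : ∀ v : EuclideanSpace ℝ (Fin m), (⟪A' v, y⟫ : ℝ) = ⟪v, b⟫ := by
    intro v
    rw [ContinuousLinearMap.adjoint_inner_left, hy]
  have hAx : (⟪A' w, x⟫ : ℝ) = ⟪w, A x⟫ := ContinuousLinearMap.adjoint_inner_left A x w
  -- optimality of what + smoothness at p = xs - A' w
  have hopt := hwhat w
  have hstep := stepC (xs - A' w)
  have hps : (⟪xs - A' w, x⟫ : ℝ) = ⟪xs, x⟫ - ⟪w, A x⟫ := by
    rw [inner_sub_left, hAx]
  have hns : ‖(xs - A' w) - xs‖^2 = α^2 * Q := by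
    rw [sub_sub_cancel_left, norm_neg, hnormAw]
  have hwAxb : (⟪w, A x⟫ : ℝ) - ⟪w, b⟫ = α * Q := by
    have : (⟪w, A x⟫ : ℝ) - ⟪w, b⟫ = ⟪w, A x - b⟫ := (inner_sub_right w (A x) b).symm
    rw [this, ← hu, hwu]
  -- put it together
  have hzsy : (⟪zs, y⟫ : ℝ) = ⟪xs, y⟫ - ⟪what, b⟫ := by
    rw [hzs, inner_sub_left, hAy]
  have key : fstar zs + ⟪what, b⟫ ≤ ⟪xs, x⟫ - f x - α/2 * Q := by
    rw [hzs]
    have e1 : 1/(2*α) * (α^2 * Q) = α/2 * Q := by field_simp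
    calc fstar (xs - A' what) + ⟪what, b⟫ ≤ fstar (xs - A' w) + ⟪w, b⟫ := hopt
      _ ≤ ⟪xs, x⟫ - ⟪w, A x⟫ - f x + 1/(2*α) * (α^2 * Q) + ⟪w, b⟫ := by
          rw [← hps, ← hns]; linarith [hstep]
      _ = ⟪xs, x⟫ - f x - α/2 * Q := by linarith [hwAxb, e1]
  -- final: unfold Breg
  simp only [Breg, inner_sub_right]
  have hx1 : (⟪zs, y⟫ : ℝ) - ⟪zs, z⟫ = ⟪xs, y⟫ - ⟪what, b⟫ - ⟪zs, z⟫ := by rw [hzsy]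
  linarith [stepA, stepB, key, hx1]
end

section
/- Let 0 ≠ a ∈ ℝⁿ, β ∈ ℝ, and let z be the Bregman projection of x onto the hyperplane H(a,β) = {y : ⟨a,y⟩ = β} with admissible subgradient z* = x* − t̂·a, where t̂ minimizes t ↦ f*(x* − t·a) + tβ. Then for all y ∈ H(a,β): D^{z*}(z,y) ≤ D^{x*}(x,y) − (α/2)(⟨a,x⟩ − β)²/‖a‖₂². -/
open scoped RealInnerProductSpace

/-- For the Bregman projection `z = ∇f*(x* − t̂·a)` of `x` onto the
hyperplane `H(a,β)`, with `t̂` minimizing `t ↦ f*(x* − t·a) + tβ` and admissible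
subgradient `z* = x* − t̂·a`, one has for all `y ∈ H(a,β)`
`D^{z*}(z,y) ≤ D^{x*}(x,y) − (α/2)(⟨a,x⟩ − β)²/‖a‖²`. -/
theorem bregman_projection_hyperplane_decrease {n : ℕ}
    (f : EuclideanSpace ℝ (Fin n) → ℝ)
    (hf : Continuous f) (hconv : ConvexOn ℝ Set.univ f)
    (α : ℝ) (hα : 0 < α)
    (hstrong : ∀ x xs, IsSubgrad f x xs →
      ∀ y, f x + ⟪xs, y - x⟫ + α / 2 * ‖y - x‖ ^ 2 ≤ f y)
    (fstar : EuclideanSpace ℝ (Fin n) → ℝ)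
    (hfstar : ∀ xs, IsLUB {r : ℝ | ∃ x, r = ⟪xs, x⟫ - f x} (fstar xs))
    (gradfstar : EuclideanSpace ℝ (Fin n) → EuclideanSpace ℝ (Fin n))
    (hgrad : ∀ xs, HasGradientAt fstar (gradfstar xs) xs)
    (a : EuclideanSpace ℝ (Fin n)) (ha : a ≠ 0) (β : ℝ)
    (x xs : EuclideanSpace ℝ (Fin n)) (hxs : IsSubgrad f x xs)
    (that : ℝ)
    (hthat : ∀ t : ℝ, fstar (xs - that • a) + that * β ≤ fstar (xs - t • a) + t * β)
    (zs z : EuclideanSpace ℝ (Fin n))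
    (hzs : zs = xs - that • a)
    (hz : z = gradfstar zs) :
    ∀ y, ⟪a, y⟫ = β →
      Breg f zs z y ≤ Breg f xs x y - α / 2 * (⟪a, x⟫ - β) ^ 2 / ‖a‖ ^ 2 := by

  intro y hy
  -- derivative of g t = fstar (xs - t • a) + t * β
  have hderiv : ∀ t : ℝ, HasDerivAt (fun t : ℝ => fstar (xs - t • a) + t * β)
      (⟪gradfstar (xs - t • a), -a⟫ + β) t := by
    intro t
    have hc : HasDerivAt (fun t : ℝ => xs - t • a) (-a) t := by
      simpa using ((hasDerivAt_id t).smul_const a).const_sub xs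
    have hfd := (hgrad (xs - t • a)).hasFDerivAt
    have h1 : HasDerivAt (fun t : ℝ => fstar (xs - t • a))
        ⟪gradfstar (xs - t • a), -a⟫ t := by
      have h2 := hfd.comp_hasDerivAt t hc; rw [inner_neg_right]; simp at h2; exact h2
    exact h1.add (hasDerivAt_mul_const β)
  have hmin : IsLocalMin (fun t : ℝ => fstar (xs - t • a) + t * β) that :=
    Filter.Eventually.of_forall hthat
  have hzero : ⟪gradfstar (xs - that • a), -a⟫ + β = 0 :=
    hmin.hasDerivAt_eq_zero (hderiv that)
  have haz : ⟪a, z⟫ = β := by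
    rw [hz, hzs, real_inner_comm]
    have := hzero
    rw [inner_neg_right] at this
    linarith
  -- key inner product identities
  have key3 : ⟪a, y - z⟫ = (0:ℝ) := by rw [inner_sub_right, hy, haz]; ring
  have key2 : ⟪zs, y - z⟫ = ⟪xs, y - z⟫ := by
    rw [hzs, inner_sub_left, real_inner_smul_left, key3]; ring
  have key1 : ⟪xs, y - x⟫ = ⟪xs, y - z⟫ + ⟪xs, z - x⟫ := by
    rw [← inner_add_right]; congr 1; abel
  -- strong convexity
  have hsc := hstrong x xs hxs z
  -- Cauchy-Schwarz
  have hcs : (⟪a, x⟫ - β) ^ 2 ≤ ‖a‖ ^ 2 * ‖z - x‖ ^ 2 := by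
    have h := abs_real_inner_le_norm a (z - x)
    have h2 : ⟪a, z - x⟫ = β - ⟪a, x⟫ := by rw [inner_sub_right, haz]
    calc (⟪a, x⟫ - β) ^ 2 = |⟪a, z - x⟫| ^ 2 := by rw [sq_abs, h2]; ring
      _ ≤ (‖a‖ * ‖z - x‖) ^ 2 := pow_le_pow_left₀ (abs_nonneg _) h 2
      _ = ‖a‖ ^ 2 * ‖z - x‖ ^ 2 := by ring
  have hna0 : (0:ℝ) < ‖a‖ := norm_pos_iff.mpr ha
  have hna : (0:ℝ) < ‖a‖ ^ 2 := by positivity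
  have hdiv : (⟪a, x⟫ - β) ^ 2 / ‖a‖ ^ 2 ≤ ‖z - x‖ ^ 2 := by
    rw [div_le_iff₀ hna]; nlinarith
  simp only [Breg]
  rw [key1, key2]
  have : α / 2 * ((⟪a, x⟫ - β) ^ 2 / ‖a‖ ^ 2) ≤ α / 2 * ‖z - x‖ ^ 2 := by
    apply mul_le_mul_of_nonneg_left hdiv; positivity
  have hre : α / 2 * (⟪a, x⟫ - β) ^ 2 / ‖a‖ ^ 2 = α / 2 * ((⟪a, x⟫ - β) ^ 2 / ‖a‖ ^ 2) := by ring
  linarith [hsc]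
end

section
/- Let z be the Bregman projection of x onto the hyperplane H(a,β), obtained via a minimizer t̂ of g(t) = f*(x* − t·a) + tβ. If x ∉ H_≤(a,β) = {y : ⟨a,y⟩ ≤ β}, then t̂ > 0 and z is also the Bregman projection of x onto the half-space H_≤(a,β). -/
open scoped RealInnerProductSpace

set_option maxHeartbeats 1000000

/-- Let `z = ∇f*(x* − t̂·a)` be the Bregman projection of `x` onto the
hyperplane `H(a,β)`, obtained via a minimizer `t̂` of `g(t) = f*(x* − t·a) + tβ`.
If `x ∉ H_≤(a,β)`, i.e. `⟨a,x⟩ > β`, then `t̂ > 0` and `z` is also the Bregman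
projection of `x` onto the half-space `H_≤(a,β)`. -/
theorem bregman_projection_halfspace {n : ℕ}
    (f : EuclideanSpace ℝ (Fin n) → ℝ)
    (hf : Continuous f) (hconv : ConvexOn ℝ Set.univ f)
    (α : ℝ) (hα : 0 < α)
    (hstrong : ∀ x xs, IsSubgrad f x xs →
      ∀ y, f x + ⟪xs, y - x⟫ + α / 2 * ‖y - x‖ ^ 2 ≤ f y)
    (fstar : EuclideanSpace ℝ (Fin n) → ℝ)
    (hfstar : ∀ xs, IsLUB {r : ℝ | ∃ x, r = ⟪xs, x⟫ - f x} (fstar xs))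
    (gradfstar : EuclideanSpace ℝ (Fin n) → EuclideanSpace ℝ (Fin n))
    (hgrad : ∀ xs, HasGradientAt fstar (gradfstar xs) xs)
    (a : EuclideanSpace ℝ (Fin n)) (ha : a ≠ 0) (β : ℝ)
    (x xs : EuclideanSpace ℝ (Fin n)) (hxs : IsSubgrad f x xs)
    (hx : ¬ (⟪a, x⟫ ≤ β))
    (that : ℝ)
    (hthat : ∀ t : ℝ, fstar (xs - that • a) + that * β ≤ fstar (xs - t • a) + t * β)
    (z : EuclideanSpace ℝ (Fin n))
    (hz : z = gradfstar (xs - that • a)) :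
    0 < that ∧ ⟪a, z⟫ ≤ β ∧
    (∀ y, ⟪a, y⟫ ≤ β → Breg f xs x z ≤ Breg f xs x y) := by
  classical
  -- Fenchel–Young inequality
  have FY : ∀ w y : EuclideanSpace ℝ (Fin n), ⟪w, y⟫ - f y ≤ fstar w :=
    fun w y => (hfstar w).1 ⟨y, rfl⟩
  -- conjugate equality at a subgradient point
  have conjEq : ∀ w u : EuclideanSpace ℝ (Fin n), IsSubgrad f u w →
      fstar w = ⟪w, u⟫ - f u := by
    intro w u hu
    refine le_antisymm ((hfstar w).2 ?_) (FY w u)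
    rintro r ⟨y, rfl⟩
    have h1 := hu y
    have h2 : ⟪w, y - u⟫ = ⟪w, y⟫ - ⟪w, u⟫ := inner_sub_right _ _ _
    linarith
  -- gradient of fstar at w equals any point where w is a subgradient
  have gradEq : ∀ w u : EuclideanSpace ℝ (Fin n), IsSubgrad f u w →
      gradfstar w = u := by
    intro w u hu
    have hconjw := conjEq w u hu
    set g := gradfstar w with hg
    set d : EuclideanSpace ℝ (Fin n) := u - g with hd
    have hsub : ∀ v : EuclideanSpace ℝ (Fin n), fstar w + ⟪u, v - w⟫ ≤ fstar v := by
      intro v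
      have h1 : ⟪v, u⟫ - f u ≤ fstar v := FY v u
      have h2 : ⟪u, v - w⟫ = ⟪v, u⟫ - ⟪w, u⟫ := by
        rw [real_inner_comm, inner_sub_left]
      linarith
    set φ : ℝ → ℝ := fun s => fstar (w + s • d) - s * ⟪u, d⟫ with hφ
    have hmin : ∀ s, φ 0 ≤ φ s := by
      intro s
      have h1 := hsub (w + s • d)
      have h2 : ⟪u, w + s • d - w⟫ = s * ⟪u, d⟫ := by
        rw [add_sub_cancel_left, real_inner_smul_right]
      simp only [hφ, zero_smul, add_zero, zero_mul, sub_zero]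
      linarith
    have hc : HasDerivAt (fun s : ℝ => w + s • d) d 0 := by
      simpa [Pi.add_def] using (hasDerivAt_const (0 : ℝ) w).add ((hasDerivAt_id (0 : ℝ)).smul_const d)
    have hF : HasFDerivAt fstar (InnerProductSpace.toDual ℝ _ g) (w + (0 : ℝ) • d) := by
      simpa using (hgrad w).hasFDerivAt
    have hφd : HasDerivAt φ (⟪g, d⟫ - ⟪u, d⟫) 0 := by
      have hcomp := hF.comp_hasDerivAt (0 : ℝ) hc
      have := hcomp.sub ((hasDerivAt_id (0 : ℝ)).mul_const ⟪u, d⟫)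
      simpa [InnerProductSpace.toDual_apply_apply, Function.comp, Pi.sub_def] using this
    have hloc : IsLocalMin φ 0 := Filter.Eventually.of_forall hmin
    have hzero : ⟪g, d⟫ - ⟪u, d⟫ = 0 := hloc.hasDerivAt_eq_zero hφd
    have hdd : (⟪d, d⟫ : ℝ) = 0 := by
      rw [hd, inner_sub_left]
      linarith
    have : d = 0 := inner_self_eq_zero.mp hdd
    have : u = g := by
      have := sub_eq_zero.mp (hd ▸ this)
      exact this
    exact this.symm
  -- existence of a maximizer of y ↦ ⟪w,y⟫ - f y
  have subgradExists : ∀ w : EuclideanSpace ℝ (Fin n),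
      ∃ u, IsSubgrad f u w := by
    intro w
    set h : EuclideanSpace ℝ (Fin n) → ℝ := fun y => ⟪w, y⟫ - f y with hh
    have hcont : Continuous h := (continuous_const.inner continuous_id).sub hf
    set R : ℝ := 2 * (‖w - xs‖ + 1) / α with hR
    have hR0 : 0 ≤ R := by positivity
    obtain ⟨u, humem, humax⟩ := (isCompact_closedBall x R).exists_isMaxOn
      ⟨x, Metric.mem_closedBall_self hR0⟩ hcont.continuousOn
    refine ⟨u, fun y => ?_⟩
    have key : h y ≤ h u := by
      by_cases hy : y ∈ Metric.closedBall x R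
      · exact humax hy
      · have hx_le : h x ≤ h u := humax (Metric.mem_closedBall_self hR0)
        have hyx : R < ‖y - x‖ := by
          simpa [Metric.mem_closedBall, dist_eq_norm] using hy
        have hst := hstrong x xs hxs y
        have hcs : ⟪w - xs, y - x⟫ ≤ ‖w - xs‖ * ‖y - x‖ := real_inner_le_norm _ _
        have hsplit : ⟪w - xs, y - x⟫ = ⟪w, y⟫ - ⟪w, x⟫ - ⟪xs, y - x⟫ := by
          rw [inner_sub_left, inner_sub_right]
        have hRα : α / 2 * R = ‖w - xs‖ + 1 := by
          rw [hR]; field_simp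
        have hnorm : 0 ≤ ‖y - x‖ := norm_nonneg _
        have h5 : α / 2 * R * ‖y - x‖ ≤ α / 2 * ‖y - x‖ * ‖y - x‖ :=
          mul_le_mul_of_nonneg_right
            (mul_le_mul_of_nonneg_left hyx.le (le_of_lt (half_pos hα))) hnorm
        have h6 : α / 2 * R * ‖y - x‖ = (‖w - xs‖ + 1) * ‖y - x‖ := by rw [hRα]
        have hkey2 : ‖w - xs‖ * ‖y - x‖ - α / 2 * ‖y - x‖ ^ 2 ≤ 0 := by
          nlinarith [h5, h6, hnorm]
        simp only [hh] at hx_le ⊢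
        linarith [hst, hcs, hsplit, hkey2, hx_le]
    have h2 : ⟪w, y - u⟫ = ⟪w, y⟫ - ⟪w, u⟫ := inner_sub_right _ _ _
    simp only [hh] at key
    linarith
  -- convexity of fstar
  have fsconv : ∀ (p q : ℝ) (u v : EuclideanSpace ℝ (Fin n)), 0 ≤ p → 0 ≤ q →
      p + q = 1 → fstar (p • u + q • v) ≤ p * fstar u + q * fstar v := by
    intro p q u v hp hq hpq
    refine (hfstar _).2 ?_
    rintro r ⟨y, rfl⟩
    have h1 : p * (⟪u, y⟫ - f y) ≤ p * fstar u := mul_le_mul_of_nonneg_left (FY u y) hp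
    have h2 : q * (⟪v, y⟫ - f y) ≤ q * fstar v := mul_le_mul_of_nonneg_left (FY v y) hq
    have h3 : ⟪p • u + q • v, y⟫ = p * ⟪u, y⟫ + q * ⟪v, y⟫ := by
      rw [inner_add_left, real_inner_smul_left, real_inner_smul_left]
    have h4 : p * f y + q * f y = f y := by rw [← add_mul, hpq, one_mul]
    linarith [h1, h2, h3.le, h3.ge, h4]
  -- the one-dimensional function G
  set G : ℝ → ℝ := fun t => fstar (xs - t • a) + t * β with hG
  have hGd : ∀ t : ℝ, HasDerivAt G (β - ⟪a, gradfstar (xs - t • a)⟫) t := by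
    intro t
    have hc : HasDerivAt (fun s : ℝ => xs - s • a) (-a) t := by
      simpa [Pi.sub_def] using (hasDerivAt_const t xs).sub ((hasDerivAt_id t).smul_const a)
    have hF : HasFDerivAt fstar
        (InnerProductSpace.toDual ℝ _ (gradfstar (xs - t • a))) (xs - t • a) :=
      (hgrad _).hasFDerivAt
    have hcomp := hF.comp_hasDerivAt t hc
    have := hcomp.add ((hasDerivAt_id t).mul_const β)
    have heq : (InnerProductSpace.toDual ℝ (EuclideanSpace ℝ (Fin n))
        (gradfstar (xs - t • a))) (-a) + 1 * β = β - ⟪a, gradfstar (xs - t • a)⟫ := by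
      rw [InnerProductSpace.toDual_apply_apply, inner_neg_right, real_inner_comm]
      ring
    rw [heq] at this
    simpa [hG, Function.comp, Pi.add_def] using this
  -- gradient at xs is x
  have hgx : gradfstar xs = x := gradEq xs x hxs
  -- z is a point where xs - that • a is a subgradient
  obtain ⟨zz, hzz⟩ := subgradExists (xs - that • a)
  have hz' : z = zz := by rw [hz, gradEq _ _ hzz]
  have hzsub : IsSubgrad f z (xs - that • a) := hz' ▸ hzz
  -- derivative of G vanishes at that
  have hlocG : IsLocalMin G that := Filter.Eventually.of_forall hthat
  have hG'that : β - ⟪a, gradfstar (xs - that • a)⟫ = 0 :=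
    hlocG.hasDerivAt_eq_zero (hGd that)
  have haz : ⟪a, z⟫ = β := by rw [hz]; linarith
  -- derivative of G at 0 is negative
  have hG'0 : β - ⟪a, gradfstar (xs - (0 : ℝ) • a)⟫ < 0 := by
    have : xs - (0 : ℝ) • a = xs := by simp
    rw [this, hgx]
    push_neg at hx
    linarith
  -- there is t' > 0 with G t' < G 0
  obtain ⟨t', ht'pos, ht'lt⟩ : ∃ t' : ℝ, 0 < t' ∧ G t' < G 0 := by
    have hslope := hasDerivAt_iff_tendsto_slope.mp (hGd 0)
    have hev : ∀ᶠ t in nhdsWithin (0 : ℝ) {(0 : ℝ)}ᶜ, slope G 0 t < 0 :=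
      hslope.eventually_lt_const hG'0
    have hev2 : ∀ᶠ t in nhdsWithin (0 : ℝ) (Set.Ioi 0), slope G 0 t < 0 :=
      hev.filter_mono (nhdsWithin_mono _ (fun t ht => ne_of_gt ht))
    have hne : (nhdsWithin (0 : ℝ) (Set.Ioi 0)).NeBot := nhdsGT_neBot 0
    obtain ⟨t', ht'slope, ht'mem⟩ := (hev2.and self_mem_nhdsWithin).exists
    refine ⟨t', ht'mem, ?_⟩
    rw [slope_def_field, sub_zero] at ht'slope
    have := (div_lt_iff₀ ht'mem).mp ht'slope
    linarith
  -- that > 0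
  have hthatpos : 0 < that := by
    by_contra hneg
    push_neg at hneg
    rcases eq_or_lt_of_le hneg with heq | hlt
    · have h1 := hthat t'
      rw [heq] at h1
      simp only [hG] at h1 ht'lt
      linarith
    · set lam : ℝ := t' / (t' - that) with hlam
      set mu : ℝ := -that / (t' - that) with hmu
      have hden : 0 < t' - that := by linarith
      have hlam0 : 0 < lam := div_pos ht'pos hden
      have hmu0 : 0 < mu := div_pos (by linarith) hden
      have hsum : lam + mu = 1 := by
        rw [hlam, hmu]; field_simp; ring
      have hscal : lam * that + mu * t' = 0 := by
        field_simp [hlam, hmu]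
        ring
      have hcomb : lam • (xs - that • a) + mu • (xs - t' • a) = xs := by
        have : lam • (xs - that • a) + mu • (xs - t' • a)
            = (lam + mu) • xs - (lam * that + mu * t') • a := by
          simp only [smul_sub, smul_smul, add_smul]
          abel
        rw [this, hsum, hscal]
        simp
      have hcv := fsconv lam mu (xs - that • a) (xs - t' • a) hlam0.le hmu0.le hsum
      rw [hcomb] at hcv
      have hG0 : G 0 = fstar xs := by simp [hG]
      have hGthat : G that = fstar (xs - that • a) + that * β := rfl
      have hGt' : G t' = fstar (xs - t' • a) + t' * β := rfl
      have hmin0 : G that ≤ G 0 := hthat 0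
      -- G 0 ≤ lam * G that + mu * G t'
      have hkey : G 0 ≤ lam * G that + mu * G t' := by
        rw [hG0, hGthat, hGt']
        have h0 : (lam * that + mu * t') * β = 0 := by rw [hscal]; ring
        linarith [hcv, h0]
      have h7 : lam * G 0 + mu * G 0 = G 0 := by rw [← add_mul, hsum, one_mul]
      have h8 : lam * G that ≤ lam * G 0 := mul_le_mul_of_nonneg_left hmin0 hlam0.le
      have h9 : mu * G t' < mu * G 0 := mul_lt_mul_of_pos_left ht'lt hmu0
      linarith [hkey, h7, h8, h9]
  refine ⟨hthatpos, le_of_eq haz, ?_⟩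
  intro y hy
  have hsy := hzsub y
  have hinner : ⟪xs - that • a, y - z⟫ = ⟪xs, y - z⟫ - that * ⟪a, y - z⟫ := by
    rw [inner_sub_left, real_inner_smul_left]
  have hayz : ⟪a, y - z⟫ = ⟪a, y⟫ - β := by rw [inner_sub_right, haz]
  have hxyz : ⟪xs, y - z⟫ = ⟪xs, y - x⟫ - ⟪xs, z - x⟫ := by
    rw [inner_sub_right, inner_sub_right, inner_sub_right]
    ring
  simp only [Breg]
  nlinarith [hsy, hthatpos, hy]
end

section
/- Let f(x) = λ‖x‖₁ + ½‖x‖₂² with λ > 0 and C₊ = {x ∈ ℝⁿ : x ≥ 0} the positive cone. For any x* ∈ ∂f(x), the Bregman projection of x onto C₊ is z with z_j = x*_j − λ if x*_j > λ and z_j = 0 if x*_j ≤ λ; moreover, the orthogonal projection P_{C₊}(x*) is an admissible subgradient in ∂f(z) satisfying ⟨P_{C₊}(x*) − x*, y − z⟩ ≥ 0 for all y ∈ C₊. -/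
open scoped RealInnerProductSpace

lemma key_comp (lam z p y : ℝ) (hlam : 0 ≤ lam) (hz : 0 ≤ z) (h1 : z ≤ p)
    (h2 : p ≤ z + lam) (h3 : z = 0 ∨ p = z + lam) :
    lam * |z| + z ^ 2 / 2 + p * (y - z) ≤ lam * |y| + y ^ 2 / 2 := by
  rcases h3 with h | h
  · subst h
    have h4 : 0 ≤ |y| - y := by linarith [le_abs_self y]
    simp only [abs_zero, mul_zero, sub_zero, zero_add] at *
    nlinarith [mul_nonneg (by linarith : (0:ℝ) ≤ lam - p) (abs_nonneg y),
      mul_nonneg h1 h4, sq_nonneg y]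
  · subst h
    rw [abs_of_nonneg hz]
    nlinarith [mul_nonneg hlam (by linarith [le_abs_self y] : (0:ℝ) ≤ |y| - y),
      sq_nonneg (y - z)]

/-- For `f(x) = λ‖x‖₁ + ½‖x‖₂²` and the positive cone `C₊`, the Bregman
projection of `x` onto `C₊` is `z` with `z_j = x*_j − λ` if `x*_j > λ` and `z_j = 0`
otherwise, and `P_{C₊}(x*)` (the componentwise positive part of `x*`) is an admissible
subgradient in `∂f(z)`. -/
theorem bregman_projection_positive_cone {n : ℕ} (lam : ℝ) (hlam : 0 < lam)
    (f : EuclideanSpace ℝ (Fin n) → ℝ)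
    (hfdef : ∀ x, f x = lam * (∑ i, |x i|) + 1 / 2 * ‖x‖ ^ 2)
    (Cpos : Set (EuclideanSpace ℝ (Fin n)))
    (hCpos : Cpos = {y : EuclideanSpace ℝ (Fin n) | ∀ i, 0 ≤ y i})
    (x xs : EuclideanSpace ℝ (Fin n)) (hxs : IsSubgrad f x xs)
    (z ps : EuclideanSpace ℝ (Fin n))
    (hzdef : ∀ j, z j = if lam < xs j then xs j - lam else 0)
    (hpsdef : ∀ j, ps j = max (xs j) 0) :
    z ∈ Cpos ∧
    (∀ y ∈ Cpos, Breg f xs x z ≤ Breg f xs x y) ∧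
    IsSubgrad f z ps ∧
    (∀ y ∈ Cpos, 0 ≤ ⟪ps - xs, y - z⟫) := by
  have hinner : ∀ u v : EuclideanSpace ℝ (Fin n), ⟪u, v⟫ = ∑ i, u i * v i := by
    intro u v
    simp [PiLp.inner_apply, RCLike.inner_apply, mul_comm]
  have hnorm : ∀ v : EuclideanSpace ℝ (Fin n), ‖v‖ ^ 2 = ∑ i, (v i) ^ 2 := by
    intro v
    rw [← real_inner_self_eq_norm_sq, hinner]
    simp [sq]
  have hf' : ∀ v : EuclideanSpace ℝ (Fin n),
      f v = ∑ i, (lam * |v i| + (v i) ^ 2 / 2) := by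
    intro v
    rw [hfdef, hnorm, Finset.mul_sum, Finset.mul_sum, ← Finset.sum_add_distrib]
    congr 1; ext i; ring
  -- componentwise facts about z and ps
  have hzpos : ∀ j, 0 ≤ z j := by
    intro j; rw [hzdef]
    split <;> [linarith [hzdef j]; linarith]
  have h1 : ∀ j, z j ≤ ps j := by
    intro j; rw [hzdef, hpsdef]
    split
    · have : 0 < xs j := lt_trans hlam (by assumption)
      rw [max_eq_left this.le]; linarith
    · exact le_max_right _ _
  have h2 : ∀ j, ps j ≤ z j + lam := by
    intro j; rw [hzdef, hpsdef]
    split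
    · have : 0 < xs j := lt_trans hlam (by assumption)
      rw [max_eq_left this.le]; linarith
    · have : xs j ≤ lam := le_of_not_gt (by assumption)
      simp [max_le_iff, this, hlam.le]
  have h3 : ∀ j, z j = 0 ∨ ps j = z j + lam := by
    intro j; rw [hzdef, hpsdef]
    split
    · right
      have : 0 < xs j := lt_trans hlam (by assumption)
      rw [max_eq_left this.le]; ring
    · left; rfl
  have hzC : z ∈ Cpos := by rw [hCpos]; exact hzpos
  have hsub : IsSubgrad f z ps := by
    intro y
    rw [hf' z, hf' y, hinner]
    have : ∀ i ∈ Finset.univ, ps i * ((y - z) i) = ps i * (y i - z i) := by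
      intro i _; simp
    rw [Finset.sum_congr rfl this, ← Finset.sum_add_distrib]
    exact Finset.sum_le_sum fun i _ =>
      key_comp lam (z i) (ps i) (y i) hlam.le (hzpos i) (h1 i) (h2 i) (h3 i)
  have hip : ∀ y ∈ Cpos, 0 ≤ ⟪ps - xs, y - z⟫ := by
    intro y hy
    rw [hCpos] at hy
    rw [hinner]
    apply Finset.sum_nonneg
    intro i _
    have hy' : ((y : EuclideanSpace ℝ (Fin n)) - z) i = y i - z i := by simp
    have hp' : ((ps : EuclideanSpace ℝ (Fin n)) - xs) i = ps i - xs i := by simp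
    rw [hy', hp']
    by_cases h : lam < xs i
    · have hx0 : 0 < xs i := lt_trans hlam h
      have : ps i = xs i := by rw [hpsdef]; exact max_eq_left hx0.le
      rw [this]; simp
    · have hz0 : z i = 0 := by rw [hzdef]; simp [h]
      have hps : xs i ≤ ps i := by rw [hpsdef]; exact le_max_left _ _
      apply mul_nonneg (by linarith) (by rw [hz0]; simpa using hy i)
  refine ⟨hzC, ?_, hsub, hip⟩
  intro y hy
  unfold Breg
  have key : f z + ⟪xs, y - z⟫ ≤ f y := by
    have h4 := hsub y
    have h5 := hip y hy
    have : ⟪ps - xs, y - z⟫ = ⟪ps, y - z⟫ - ⟪xs, y - z⟫ := inner_sub_left _ _ _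
    linarith [this ▸ h5]
  have hlin : ⟪xs, y - x⟫ - ⟪xs, z - x⟫ = ⟪xs, y - z⟫ := by
    rw [inner_sub_right, inner_sub_right, inner_sub_right]; ring
  linarith
end

section
/- Let f(x) = λ‖x‖₁ + ½‖x‖₂² with λ > 0 and B = ∏_{j=1}^n [a_j, b_j] a box containing 0. For x* ∈ ∂f(x), the Bregman projection of x onto B is z = P_B(S_λ(x*)), and an admissible subgradient z* ∈ ∂f(z) is given componentwise by z*_j = x*_j if a_j ≤ (S_λ(x*))_j ≤ b_j, z*_j = b_j + λ if (S_λ(x*))_j > b_j, and z*_j = a_j − λ if (S_λ(x*))_j < a_j. -/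
open scoped RealInnerProductSpace

/-- Scalar soft shrinkage `S_λ(t) = max(|t| − λ, 0)·sign(t)`. -/
noncomputable def softShrink (lam t : ℝ) : ℝ := max (|t| - lam) 0 * Real.sign t

lemma softShrink_eq (lam c : ℝ) (hl : 0 < lam) :
    softShrink lam c = if lam < c then c - lam else if c < -lam then c + lam else 0 := by
  unfold softShrink
  rcases lt_trichotomy c 0 with h | h | h
  · rw [Real.sign_of_neg h, abs_of_neg h]
    rcases lt_or_ge c (-lam) with h2 | h2
    · rw [if_neg (by linarith), if_pos h2, max_eq_left (by linarith)]; ring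
    · rw [if_neg (by linarith), if_neg (by linarith), max_eq_right (by linarith)]; ring
  · subst h; simp [Real.sign_zero, hl.le, not_lt.mpr hl.le]
  · rw [Real.sign_of_pos h, abs_of_pos h]
    rcases lt_or_ge lam c with h2 | h2
    · rw [if_pos h2, max_eq_left (by linarith)]; ring
    · rw [if_neg (not_lt.mpr h2), if_neg (by linarith), max_eq_right (by linarith)]; ring

lemma sub_ineq (lam z s t : ℝ) (hl : 0 < lam) (h1 : |s - z| ≤ lam)
    (h2 : (s - z) * z = lam * |z|) :
    lam * |z| + z ^ 2 / 2 + s * (t - z) ≤ lam * |t| + t ^ 2 / 2 := by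
  have h3 := abs_le.mp h1
  have h5 := le_abs_self t; have h6 := neg_abs_le t
  nlinarith [sq_nonneg (t - z), mul_nonneg (sub_nonneg.mpr h3.2) (sub_nonneg.mpr h5),
    mul_nonneg (by linarith : (0:ℝ) ≤ lam + (s - z)) (by linarith : (0:ℝ) ≤ |t| + t)]

lemma key_props (lam a b c z s : ℝ) (hl : 0 < lam) (ha : a ≤ 0) (hb : 0 ≤ b)
    (hz : z = max a (min b (softShrink lam c)))
    (hs : s = if b < softShrink lam c then b + lam
        else if softShrink lam c < a then a - lam else c) :
    |s - z| ≤ lam ∧ (s - z) * z = lam * |z| ∧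
    (∀ t, a ≤ t → t ≤ b → 0 ≤ (s - c) * (t - z)) := by
  rw [softShrink_eq lam c hl] at hz hs
  rcases lt_or_ge lam c with h1 | h1
  · rw [if_pos h1] at hz hs
    rcases lt_or_ge b (c - lam) with h2 | h2
    · have hz' : z = b := by
        rw [hz, min_eq_left h2.le, max_eq_right (ha.trans hb)]
      rw [if_pos h2] at hs
      refine ⟨?_, ?_, ?_⟩
      · rw [hs, hz']; simp [abs_of_pos hl]
      · rw [hs, hz', abs_of_nonneg hb]; ring
      · intro t hta htb
        rw [hs, hz']
        have : b + lam - c < 0 := by linarith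
        nlinarith
    · have hσpos : 0 < c - lam := by linarith
      have hz' : z = c - lam := by
        rw [hz, min_eq_right h2, max_eq_right (by linarith)]
      rw [if_neg (not_lt.mpr h2), if_neg (by push_neg; linarith)] at hs
      refine ⟨?_, ?_, ?_⟩
      · rw [hs, hz']; simp [abs_of_pos hl]
      · rw [hs, hz', abs_of_pos hσpos]; ring
      · intro t _ _; rw [hs]; simp
  · rw [if_neg (not_lt.mpr h1)] at hz hs
    rcases lt_or_ge c (-lam) with h2 | h2
    · rw [if_pos h2] at hz hs
      have hσneg : c + lam < 0 := by linarith
      rcases lt_or_ge (c + lam) a with h3 | h3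
      · have hz' : z = a := by
          rw [hz, min_eq_right (by linarith), max_eq_left h3.le]
        rw [if_neg (by push_neg; linarith), if_pos h3] at hs
        refine ⟨?_, ?_, ?_⟩
        · rw [hs, hz']; simp [abs_of_pos hl]
        · rw [hs, hz', abs_of_nonpos ha]; ring
        · intro t hta htb
          rw [hs, hz']
          have : 0 < a - lam - c := by linarith
          nlinarith
      · have hz' : z = c + lam := by
          rw [hz, min_eq_right (by linarith), max_eq_right h3]
        rw [if_neg (by push_neg; linarith), if_neg (not_lt.mpr h3)] at hs
        refine ⟨?_, ?_, ?_⟩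
        · rw [hs, hz']; simp [abs_of_pos hl]
        · rw [hs, hz', abs_of_neg hσneg]; ring
        · intro t _ _; rw [hs]; simp
    · rw [if_neg (not_lt.mpr h2)] at hz hs
      have hz' : z = 0 := by rw [hz, min_eq_right hb, max_eq_right ha]
      rw [if_neg (not_lt.mpr hb), if_neg (not_lt.mpr ha)] at hs
      refine ⟨?_, ?_, ?_⟩
      · rw [hs, hz']; rw [abs_le]; constructor <;> linarith
      · rw [hs, hz']; simp
      · intro t _ _; rw [hs]; simp

/-- For `f(x) = λ‖x‖₁ + ½‖x‖₂²` and a box `B = ∏ [a_j, b_j]` containing `0`,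
the Bregman projection of `x` onto `B` is `z = P_B(S_λ(x*))`, with the stated admissible
subgradient `z* ∈ ∂f(z)`. -/
theorem bregman_projection_box {n : ℕ} (lam : ℝ) (hlam : 0 < lam)
    (f : EuclideanSpace ℝ (Fin n) → ℝ)
    (hfdef : ∀ x, f x = lam * (∑ i, |x i|) + 1 / 2 * ‖x‖ ^ 2)
    (a b : Fin n → ℝ) (hab : ∀ j, a j ≤ 0 ∧ 0 ≤ b j)  -- box contains 0
    (B : Set (EuclideanSpace ℝ (Fin n)))
    (hB : B = {y : EuclideanSpace ℝ (Fin n) | ∀ j, a j ≤ y j ∧ y j ≤ b j})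
    (x xs : EuclideanSpace ℝ (Fin n)) (hxs : IsSubgrad f x xs)
    (z zs : EuclideanSpace ℝ (Fin n))
    (hzdef : ∀ j, z j = max (a j) (min (b j) (softShrink lam (xs j))))  -- z = P_B(S_λ(x*))
    (hzsdef : ∀ j, zs j =
      if b j < softShrink lam (xs j) then b j + lam
      else if softShrink lam (xs j) < a j then a j - lam
      else xs j) :
    z ∈ B ∧
    (∀ y ∈ B, Breg f xs x z ≤ Breg f xs x y) ∧
    IsSubgrad f z zs ∧
    (∀ y ∈ B, 0 ≤ ⟪zs - xs, y - z⟫) := by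
  have hab' : ∀ j, a j ≤ b j := fun j => (hab j).1.trans (hab j).2
  have hkey : ∀ j, |zs j - z j| ≤ lam ∧ (zs j - z j) * z j = lam * |z j| ∧
      (∀ t, a j ≤ t → t ≤ b j → 0 ≤ (zs j - xs j) * (t - z j)) :=
    fun j => key_props lam (a j) (b j) (xs j) (z j) (zs j) hlam (hab j).1 (hab j).2
      (hzdef j) (hzsdef j)
  have hfsum : ∀ y : EuclideanSpace ℝ (Fin n),
      f y = ∑ j, (lam * |y j| + (y j) ^ 2 / 2) := by
    intro y
    have hn : ‖y‖ ^ 2 = ∑ i, (y i) ^ 2 := by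
      rw [EuclideanSpace.norm_eq, Real.sq_sqrt (by positivity)]
      simp [sq_abs]
    rw [hfdef, hn, Finset.mul_sum, Finset.mul_sum, ← Finset.sum_add_distrib]
    exact Finset.sum_congr rfl (fun j _ => by ring)
  have hinner : ∀ u v : EuclideanSpace ℝ (Fin n), ⟪u, v⟫ = ∑ j, u j * v j := by
    intro u v; simp [PiLp.inner_apply, RCLike.inner_apply, mul_comm]
  have hzB : z ∈ B := by
    rw [hB]
    intro j
    rw [hzdef j]
    exact ⟨le_max_left _ _, max_le (hab' j) (min_le_left _ _)⟩
  refine ⟨hzB, ?_, ?_, ?_⟩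
  · intro y hy
    rw [hB] at hy
    simp only [Breg, inner_sub_right]
    have key : f z - ⟪xs, z⟫ ≤ f y - ⟪xs, y⟫ := by
      rw [hfsum z, hfsum y, hinner xs z, hinner xs y, ← Finset.sum_sub_distrib,
        ← Finset.sum_sub_distrib]
      apply Finset.sum_le_sum
      intro j _
      have A := sub_ineq lam (z j) (zs j) (y j) hlam (hkey j).1 (hkey j).2.1
      have C := (hkey j).2.2 (y j) (hy j).1 (hy j).2
      nlinarith [A, C]
    linarith
  · intro y
    have hinner2 : ⟪zs, y - z⟫ = ∑ j, zs j * (y j - z j) := by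
      simp [PiLp.inner_apply, RCLike.inner_apply, mul_comm]
    rw [hfsum z, hfsum y, hinner2, ← Finset.sum_add_distrib]
    apply Finset.sum_le_sum
    intro j _
    exact sub_ineq lam (z j) (zs j) (y j) hlam (hkey j).1 (hkey j).2.1
  · intro y hy
    rw [hB] at hy
    have hinner3 : ⟪zs - xs, y - z⟫ = ∑ j, (zs j - xs j) * (y j - z j) := by
      simp [PiLp.inner_apply, RCLike.inner_apply, mul_comm]
    rw [hinner3]
    exact Finset.sum_nonneg fun j _ => (hkey j).2.2 (y j) (hy j).1 (hy j).2
end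

section
/- Let A ∈ ℝ^{m×n}, Q ⊂ ℝᵐ nonempty closed convex, C_Q = {x ∈ ℝⁿ : Ax ∈ Q}, and suppose x̃ ∉ C_Q. Set w := Ax̃ − P_Q(Ax̃) and β := ⟨Aᵀw, x̃⟩ − ‖w‖₂². Then Aᵀw ≠ 0, ⟨Aᵀw, x̃⟩ > β, and C_Q ⊆ {x : ⟨Aᵀw, x⟩ ≤ β}; i.e., the hyperplane {x : ⟨Aᵀw, x⟩ = β} strictly separates x̃ from C_Q. -/
open scoped RealInnerProductSpace

/-- If `x̃ ∉ C_Q = {x : Ax ∈ Q}` (with `C_Q` nonempty, `Q` nonempty closed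
convex) and `w := Ax̃ − P_Q(Ax̃)`, `β := ⟨Aᵀw, x̃⟩ − ‖w‖²`, then `Aᵀw ≠ 0`,
`⟨Aᵀw, x̃⟩ > β`, and `C_Q ⊆ {x : ⟨Aᵀw, x⟩ ≤ β}`: the hyperplane `{⟨Aᵀw, ·⟩ = β}`
separates `x̃` from `C_Q`. -/
theorem separating_hyperplane {n m : ℕ}
    (A : EuclideanSpace ℝ (Fin n) →L[ℝ] EuclideanSpace ℝ (Fin m))
    (Q : Set (EuclideanSpace ℝ (Fin m)))
    (hQ : Q.Nonempty) (hQclosed : IsClosed Q) (hQconv : Convex ℝ Q)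
    (hCQ : ∃ x, A x ∈ Q)  -- C_Q nonempty
    (xt : EuclideanSpace ℝ (Fin n))
    (hxt : A xt ∉ Q)
    (p : EuclideanSpace ℝ (Fin m))
    (hp : p ∈ Q ∧ ∀ q ∈ Q, ‖A xt - p‖ ≤ ‖A xt - q‖)  -- p = P_Q(A x̃)
    (w : EuclideanSpace ℝ (Fin m)) (hw : w = A xt - p)
    (β : ℝ) (hβ : β = ⟪ContinuousLinearMap.adjoint A w, xt⟫ - ‖w‖ ^ 2) :
    ContinuousLinearMap.adjoint A w ≠ 0 ∧
    β < ⟪ContinuousLinearMap.adjoint A w, xt⟫ ∧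
    (∀ x, A x ∈ Q → ⟪ContinuousLinearMap.adjoint A w, x⟫ ≤ β) := by
  have hwne : w ≠ 0 := by
    rw [hw, sub_ne_zero]
    intro h; exact hxt (h ▸ hp.1)
  have hwpos : (0:ℝ) < ‖w‖ ^ 2 := pow_pos (norm_pos_iff.mpr hwne) 2
  -- variational inequality
  have hvar : ∀ q ∈ Q, ⟪w, q - p⟫ ≤ 0 := by
    haveI : Nonempty Q := ⟨⟨p, hp.1⟩⟩
    have hinf : ‖A xt - p‖ = ⨅ q : Q, ‖A xt - q‖ := by
      refine le_antisymm (le_ciInf fun q => hp.2 q q.2) ?_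
      exact ciInf_le ⟨0, fun r ⟨q, hq⟩ => hq ▸ norm_nonneg _⟩ (⟨p, hp.1⟩ : Q)
    have := (norm_eq_iInf_iff_real_inner_le_zero hQconv hp.1).mp hinf
    intro q hq
    rw [hw]
    exact this q hq
  have hadj : ∀ x, ⟪ContinuousLinearMap.adjoint A w, x⟫ = ⟪w, A x⟫ := fun x =>
    ContinuousLinearMap.adjoint_inner_left A x w
  have hβ' : β = ⟪w, p⟫ := by
    rw [hβ, hadj, ← real_inner_self_eq_norm_sq, ← inner_sub_right, hw]
    congr 1
    abel
  have hle : ∀ x, A x ∈ Q → ⟪ContinuousLinearMap.adjoint A w, x⟫ ≤ β := by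
    intro x hx
    rw [hadj, hβ']
    have := hvar (A x) hx
    rw [inner_sub_right] at this
    linarith
  refine ⟨?_, by rw [hβ]; linarith, hle⟩
  intro h0
  obtain ⟨x0, hx0⟩ := hCQ
  have h1 := hle x0 hx0
  rw [h0, inner_zero_left] at h1
  have h2 : β < 0 := by
    rw [hβ, h0, inner_zero_left]; linarith
  linarith
end

section
/- Let f be strongly convex with modulus α, x*_{k−1} ∈ ℝⁿ, a = Aᵀw ≠ 0 for some w ∈ ℝᵐ, A ∈ ℝ^{m×n}, and β = ⟨a, x_{k−1}⟩ − ‖w‖₂² where x_{k−1} = ∇f*(x*_{k−1}). Define g(t) = f*(x*_{k−1} − t·a) + tβ. Then g'(0) = −‖w‖₂², and for every t ≥ 0: g'(t) ≤ (t/α)‖a‖₂² − ‖w‖₂². In particular the dynamic stepsize t̃ = α‖w‖₂²/‖a‖₂² satisfies g'(t̃) ≤ 0. -/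
open scoped RealInnerProductSpace

/-- With `a = Aᵀw ≠ 0`, `x_{k−1} = ∇f*(x*_{k−1})`,
`β = ⟨a, x_{k−1}⟩ − ‖w‖²` and `g(t) = f*(x*_{k−1} − t·a) + tβ`, one has `g'(0) = −‖w‖²`,
`g'(t) ≤ (t/α)‖a‖² − ‖w‖²` for all `t ≥ 0`, and in particular the dynamic stepsize
`t̃ = α‖w‖²/‖a‖²` satisfies `g'(t̃) ≤ 0`. -/
theorem linesearch_derivative_bounds {n m : ℕ}
    (fstar : EuclideanSpace ℝ (Fin n) → ℝ)
    (gradfstar : EuclideanSpace ℝ (Fin n) → EuclideanSpace ℝ (Fin n))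
    (hgrad : ∀ u, HasGradientAt fstar (gradfstar u) u)
    (α : ℝ) (hα : 0 < α)
    (hlip : ∀ u v, ‖gradfstar u - gradfstar v‖ ≤ (1 / α) * ‖u - v‖)
    (A : EuclideanSpace ℝ (Fin n) →L[ℝ] EuclideanSpace ℝ (Fin m))
    (w : EuclideanSpace ℝ (Fin m))
    (a : EuclideanSpace ℝ (Fin n)) (hadef : a = ContinuousLinearMap.adjoint A w)
    (ha : a ≠ 0)
    (xks : EuclideanSpace ℝ (Fin n))  -- x*_{k−1}
    (β : ℝ) (hβ : β = ⟪a, gradfstar xks⟫ - ‖w‖ ^ 2)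
    (g : ℝ → ℝ) (hg : ∀ t, g t = fstar (xks - t • a) + t * β) :
    HasDerivAt g (-‖w‖ ^ 2) 0 ∧
    (∀ t : ℝ, 0 ≤ t → deriv g t ≤ t / α * ‖a‖ ^ 2 - ‖w‖ ^ 2) ∧
    deriv g (α * ‖w‖ ^ 2 / ‖a‖ ^ 2) ≤ 0 := by
  have hgeq : g = fun t : ℝ => fstar (xks - t • a) + t * β := funext hg
  have key : ∀ t : ℝ, HasDerivAt g (-⟪a, gradfstar (xks - t • a)⟫ + β) t := by
    intro t
    have hline : HasDerivAt (fun t : ℝ => xks - t • a) (-a) t := by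
      simpa using ((hasDerivAt_id t).smul_const a).const_sub xks
    have hf := ((hgrad (xks - t • a)).hasFDerivAt).comp_hasDerivAt t hline
    have hlin : HasDerivAt (fun t : ℝ => t * β) β t := by
      simpa using (hasDerivAt_id t).mul_const β
    have := hf.add hlin
    rw [hgeq]
    convert this using 1
    case e'_4 => rfl
    case e'_5 => rfl
    case e'_8 => rfl
    rw [InnerProductSpace.toDual_apply_apply, inner_neg_right, real_inner_comm]
  have hderiv : ∀ t : ℝ, deriv g t = -⟪a, gradfstar (xks - t • a)⟫ + β := fun t =>
    (key t).deriv
  have hbound : ∀ t : ℝ, 0 ≤ t → deriv g t ≤ t / α * ‖a‖ ^ 2 - ‖w‖ ^ 2 := by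
    intro t ht
    rw [hderiv t, hβ]
    have h1 : -⟪a, gradfstar (xks - t • a)⟫ + ⟪a, gradfstar xks⟫
        = ⟪a, gradfstar xks - gradfstar (xks - t • a)⟫ := by
      rw [inner_sub_right]; ring
    have h2 : ⟪a, gradfstar xks - gradfstar (xks - t • a)⟫ ≤ t / α * ‖a‖ ^ 2 := by
      calc ⟪a, gradfstar xks - gradfstar (xks - t • a)⟫
          ≤ ‖a‖ * ‖gradfstar xks - gradfstar (xks - t • a)‖ := real_inner_le_norm _ _
        _ ≤ ‖a‖ * ((1 / α) * ‖xks - (xks - t • a)‖) := by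
            have := hlip xks (xks - t • a)
            exact mul_le_mul_of_nonneg_left this (norm_nonneg a)
        _ = t / α * ‖a‖ ^ 2 := by
            have : ‖xks - (xks - t • a)‖ = t * ‖a‖ := by
              rw [sub_sub_cancel, norm_smul, Real.norm_eq_abs, abs_of_nonneg ht]
            rw [this]; ring
    nlinarith [h2]
  refine ⟨?_, hbound, ?_⟩
  · have h0 := key 0
    have : -⟪a, gradfstar (xks - (0:ℝ) • a)⟫ + β = -‖w‖ ^ 2 := by
      rw [hβ]; simp; ring
    rwa [this] at h0
  · have hna : ‖a‖ ≠ 0 := norm_ne_zero_iff.2 ha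
    have ha' : (0:ℝ) < ‖a‖ ^ 2 := by positivity
    have ht : 0 ≤ α * ‖w‖ ^ 2 / ‖a‖ ^ 2 := by positivity
    have := hbound _ ht
    have heq : α * ‖w‖ ^ 2 / ‖a‖ ^ 2 / α * ‖a‖ ^ 2 - ‖w‖ ^ 2 = 0 := by
      field_simp
      ring
    linarith [this, heq.le]
end
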